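/- arXiv:1007.1775 — 9 statements merged into one kernel-verified Lean document; each statement's English description precedes it below -/
import Mathlib

section
/- For the ternary Maxwell-Stefan matrix B, det B ≥ min{1/(Đ₁₂Đ₁₃), 1/(Đ₁₂Đ₂₃), 1/(Đ₁₃Đ₂₃)} > 0; in particular B is invertible for every composition vector. -/
theorem ternary_MS_det_lower_bound_invertible
    (D12 D13 D23 x1 x2 : ℝ)
    (hD12 : 0 < D12) (hD13 : 0 < D13) (hD23 : 0 < D23)
    (hx1 : 0 ≤ x1) (hx2 : 0 ≤ x2) (hsum : x1 + x2 ≤ 1)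
    (B : Matrix (Fin 2) (Fin 2) ℝ)
    (hB : B = !![1/D13 + x2*(1/D12 - 1/D13), -x1*(1/D12 - 1/D13);
                 -x2*(1/D12 - 1/D23), 1/D23 + x1*(1/D12 - 1/D23)]) :
    B.det ≥ min (min (1/(D12*D13)) (1/(D12*D23))) (1/(D13*D23))
    ∧ 0 < min (min (1/(D12*D13)) (1/(D12*D23))) (1/(D13*D23))
    ∧ IsUnit B := by
  set m := min (min (1/(D12*D13)) (1/(D12*D23))) (1/(D13*D23)) with hm
  have h1 : m ≤ 1/(D12*D13) := le_trans (min_le_left _ _) (min_le_left _ _)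
  have h2 : m ≤ 1/(D12*D23) := le_trans (min_le_left _ _) (min_le_right _ _)
  have h3 : m ≤ 1/(D13*D23) := min_le_right _ _
  have hdet : B.det = x1 * (1/(D12*D13)) + x2 * (1/(D12*D23))
      + (1 - x1 - x2) * (1/(D13*D23)) := by
    subst hB
    rw [Matrix.det_fin_two_of]
    field_simp
    ring
  have hx3 : 0 ≤ 1 - x1 - x2 := by linarith
  have hge : B.det ≥ m := by
    rw [hdet]
    nlinarith [mul_nonneg hx1 (sub_nonneg.mpr h1), mul_nonneg hx2 (sub_nonneg.mpr h2),
      mul_nonneg hx3 (sub_nonneg.mpr h3)]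
  have hmpos : 0 < m := by
    apply lt_min (lt_min _ _) <;> positivity
  refine ⟨hge, hmpos, ?_⟩
  rw [Matrix.isUnit_iff_isUnit_det, isUnit_iff_ne_zero]
  exact ne_of_gt (lt_of_lt_of_le hmpos hge)
end

section
/- For the ternary Maxwell-Stefan matrix B, one has (tr B)² ≥ 3 · det B. Consequently the eigenvalues of B are real or lie in a sector of half-angle less than π/6 about the positive real axis. -/
open Polynomial in
lemma charpoly_root_quadratic (M : Matrix (Fin 2) (Fin 2) ℂ) (lam : ℂ)
    (h : M.charpoly.IsRoot lam) :
    lam ^ 2 - M.trace * lam + M.det = 0 := by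
  have : M.charpoly = X ^ 2 - Polynomial.C M.trace * X + Polynomial.C M.det := by
    rw [Matrix.charpoly, Matrix.det_fin_two, Matrix.trace_fin_two, Matrix.det_fin_two,
      Matrix.charmatrix_apply_eq, Matrix.charmatrix_apply_eq,
      Matrix.charmatrix_apply_ne _ _ _ (by decide), Matrix.charmatrix_apply_ne _ _ _ (by decide)]
    simp only [Polynomial.C_add, Polynomial.C_mul, Polynomial.C_sub]
    ring
  have h2 := h
  rw [Polynomial.IsRoot, this] at h2
  simpa using h2

theorem ternary_MS_trace_sq_ge_three_det
    (D12 D13 D23 x1 x2 : ℝ)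
    (hD12 : 0 < D12) (hD13 : 0 < D13) (hD23 : 0 < D23)
    (hx1 : 0 ≤ x1) (hx2 : 0 ≤ x2) (hsum : x1 + x2 ≤ 1)
    (x3 : ℝ) (hx3 : x3 = 1 - x1 - x2)
    (B : Matrix (Fin 2) (Fin 2) ℝ)
    (hB : B = !![1/D13 + x2*(1/D12 - 1/D13), -x1*(1/D12 - 1/D13);
                 -x2*(1/D12 - 1/D23), 1/D23 + x1*(1/D12 - 1/D23)]) :
    B.trace ^ 2 ≥ 3 * B.det
    ∧ ∀ lam : ℂ, (B.map (Complex.ofReal)).charpoly.IsRoot lam →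
        lam.im = 0 ∨ |lam.arg| < Real.pi / 6 := by
  have ha : 0 < 1/D12 := by positivity
  have hb : 0 < 1/D13 := by positivity
  have hc : 0 < 1/D23 := by positivity
  set a := 1/D12 with ha'
  set b := 1/D13 with hb'
  set c := 1/D23 with hc'
  have hx3' : 0 ≤ x3 := by linarith
  have htr : B.trace = (b + x2*(a-b)) + (c + x1*(a-c)) := by
    rw [hB, Matrix.trace_fin_two]; simp
  have hdet : B.det = (b + x2*(a-b)) * (c + x1*(a-c)) - (x1*(a-b)) * (x2*(a-c)) := by
    rw [hB, Matrix.det_fin_two]; simp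
  have hdnn : 0 ≤ B.det := by
    rw [hdet]
    have : (b + x2*(a-b)) * (c + x1*(a-c)) - (x1*(a-b)) * (x2*(a-c))
        = x1*a*b + x2*a*c + (1-x1-x2)*b*c := by ring
    rw [this]
    have h3 : 0 ≤ 1 - x1 - x2 := by linarith
    positivity
  have key : B.trace ^ 2 ≥ 4 * B.det := by
    rw [htr, hdet]
    rcases le_or_gt 0 ((a-b)*(a-c)) with hca | hca
    · nlinarith [sq_nonneg ((b + x2*(a-b)) - (c + x1*(a-c))),
        mul_nonneg (mul_nonneg hx1 hx2) hca]
    · have hbc : 0 < (b-a)*(a-c) := by nlinarith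
      nlinarith [sq_nonneg ((b-a)*(1-x2) - (a-c)*(1-x1)),
        mul_nonneg (by linarith : (0:ℝ) ≤ 1-x1-x2) hbc.le]
  constructor
  · linarith
  · intro lam hroot
    left
    have hq := charpoly_root_quadratic _ lam hroot
    have htr2 : (B.map Complex.ofReal).trace = (B.trace : ℂ) := by
      rw [Matrix.trace_fin_two, Matrix.trace_fin_two]; simp [Matrix.map_apply]
    have hdet2 : (B.map Complex.ofReal).det = (B.det : ℂ) := by
      rw [Matrix.det_fin_two, Matrix.det_fin_two]; simp [Matrix.map_apply]
    rw [htr2, hdet2] at hq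
    set t := B.trace
    set d := B.det
    by_contra him
    rw [sq] at hq
    rw [Complex.ext_iff] at hq
    obtain ⟨hre, him'⟩ := hq
    simp only [Complex.add_re, Complex.sub_re, Complex.mul_re, Complex.mul_im,
      Complex.add_im, Complex.sub_im, Complex.ofReal_re, Complex.ofReal_im,
      Complex.zero_re, Complex.zero_im] at hre him'
    -- him' : im*(2re - t) = 0 variant
    have hre2 : lam.re = t / 2 := by
      rcases mul_eq_zero.mp (show lam.im * (2*lam.re - t) = 0 by linarith) with h | h
      · exact absurd h him
      · linarith
    have himsq : 0 < lam.im ^ 2 := by positivity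
    nlinarith [hre, hre2, key, himsq]
end

section
/- The symmetrized Maxwell-Stefan matrix A_S is negative semidefinite: for every v ∈ ℝⁿ, ⟨A_S v, v⟩ ≤ 0, with equality if and only if v is a scalar multiple of √x. -/
theorem MS_symmetrized_negative_semidefinite
    (n : ℕ) (hn : 2 ≤ n)
    (D : Fin n → Fin n → ℝ)
    (hDpos : ∀ i j, i ≠ j → 0 < D i j)
    (hDsymm : ∀ i j, D i j = D j i)
    (x : Fin n → ℝ) (hx : ∀ i, 0 < x i) (hxsum : ∑ i, x i = 1)
    (AS : Matrix (Fin n) (Fin n) ℝ)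
    (hAS : ∀ i j, AS i j =
      if i = j then -(∑ k ∈ Finset.univ.erase i, x k / D i k)
      else Real.sqrt (x i * x j) / D i j) :
    ∀ v : Fin n → ℝ,
      dotProduct (AS.mulVec v) v ≤ 0
      ∧ (dotProduct (AS.mulVec v) v = 0 ↔
          ∃ c : ℝ, v = c • fun i => Real.sqrt (x i)) := by
  intro v
  have hspos : ∀ i, 0 < Real.sqrt (x i) := fun i => Real.sqrt_pos.mpr (hx i)
  set w : Fin n → ℝ := fun i => v i / Real.sqrt (x i) with hwdef
  have hv : ∀ i, v i = Real.sqrt (x i) * w i := by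
    intro i
    have := (hspos i).ne'
    rw [hwdef]; field_simp
  have hsq : ∀ i, Real.sqrt (x i) * Real.sqrt (x i) = x i :=
    fun i => Real.mul_self_sqrt (hx i).le
  set S : ℝ := ∑ i, ∑ j ∈ Finset.univ.erase i, x i * x j / D i j * (w i - w j) ^ 2
    with hSdef
  -- swapping lemma for sums over off-diagonal pairs
  have swap : ∀ f : Fin n → Fin n → ℝ,
      ∑ i, ∑ j ∈ Finset.univ.erase i, f i j
        = ∑ i, ∑ j ∈ Finset.univ.erase i, f j i := by
    intro f
    rw [Finset.sum_comm' (s' := fun j => Finset.univ.erase j) (t' := Finset.univ)]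
    intro i j
    simp [Finset.mem_erase, ne_comm]
  -- expand each row of the quadratic form
  have expand : ∀ i, AS.mulVec v i * v i
      = ∑ j ∈ Finset.univ.erase i, x i * x j / D i j * (w i * w j - w i ^ 2) := by
    intro i
    have hmv : AS.mulVec v i = ∑ j, AS i j * v j := by
      simp [Matrix.mulVec, dotProduct]
    rw [hmv, ← Finset.add_sum_erase _ (fun j => AS i j * v j) (Finset.mem_univ i)]
    rw [add_mul, Finset.sum_mul, hAS i i, if_pos rfl, neg_mul, neg_mul,
      Finset.sum_mul, Finset.sum_mul, neg_eq_neg_one_mul, Finset.mul_sum,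
      ← Finset.sum_add_distrib]
    refine Finset.sum_congr rfl fun j hj => ?_
    have hji : j ≠ i := (Finset.mem_erase.mp hj).1
    rw [hAS i j, if_neg (Ne.symm hji), hv i, hv j, Real.sqrt_mul (hx i).le]
    set si := Real.sqrt (x i) with hsi
    set sj := Real.sqrt (x j) with hsj
    have h1 : si * si = x i := hsq i
    have h2 : sj * sj = x j := hsq j
    rw [← h1, ← h2]
    ring
  have key : dotProduct (AS.mulVec v) v = -(1/2) * S := by
    have hQ : dotProduct (AS.mulVec v) v
        = ∑ i, ∑ j ∈ Finset.univ.erase i, x i * x j / D i j * (w i * w j - w i ^ 2) := by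
      rw [dotProduct]
      exact Finset.sum_congr rfl fun i _ => expand i
    have cancel : (∑ i, ∑ j ∈ Finset.univ.erase i, 1/2 * (x i * x j / D i j * w i ^ 2))
        = ∑ i, ∑ j ∈ Finset.univ.erase i, 1/2 * (x i * x j / D i j * w j ^ 2) := by
      rw [swap (fun i j => 1/2 * (x i * x j / D i j * w i ^ 2))]
      refine Finset.sum_congr rfl fun i _ => Finset.sum_congr rfl fun j _ => ?_
      rw [hDsymm j i]; ring
    rw [hQ]
    calc ∑ i, ∑ j ∈ Finset.univ.erase i, x i * x j / D i j * (w i * w j - w i ^ 2)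
        = ∑ i, ∑ j ∈ Finset.univ.erase i,
            (-(1/2) * (x i * x j / D i j * (w i - w j) ^ 2)
              - 1/2 * (x i * x j / D i j * w i ^ 2)
              + 1/2 * (x i * x j / D i j * w j ^ 2)) := by
          refine Finset.sum_congr rfl fun i _ => Finset.sum_congr rfl fun j _ => ?_
          ring
      _ = (∑ i, ∑ j ∈ Finset.univ.erase i, -(1/2) * (x i * x j / D i j * (w i - w j) ^ 2))
          - (∑ i, ∑ j ∈ Finset.univ.erase i, 1/2 * (x i * x j / D i j * w i ^ 2))
          + (∑ i, ∑ j ∈ Finset.univ.erase i, 1/2 * (x i * x j / D i j * w j ^ 2)) := by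
          simp only [Finset.sum_add_distrib, Finset.sum_sub_distrib]
      _ = ∑ i, ∑ j ∈ Finset.univ.erase i, -(1/2) * (x i * x j / D i j * (w i - w j) ^ 2) := by
          rw [cancel]; ring
      _ = -(1/2) * S := by
          rw [hSdef, Finset.mul_sum]
          refine Finset.sum_congr rfl fun i _ => ?_
          rw [Finset.mul_sum]
  have hSnn : (0:ℝ) ≤ S := by
    refine Finset.sum_nonneg fun i _ => Finset.sum_nonneg fun j hj => ?_
    have hji : j ≠ i := (Finset.mem_erase.mp hj).1
    exact mul_nonneg (div_nonneg (mul_nonneg (hx i).le (hx j).le)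
      (hDpos i j (Ne.symm hji)).le) (sq_nonneg _)
  constructor
  · rw [key]; linarith
  constructor
  · -- equality implies v proportional to sqrt x
    intro hQ0
    have hS0 : S = 0 := by rw [key] at hQ0; linarith
    have hterm : ∀ i ∈ Finset.univ, ∀ j ∈ Finset.univ.erase i,
        x i * x j / D i j * (w i - w j) ^ 2 = 0 := by
      intro i _
      have hinn : ∀ j ∈ Finset.univ.erase i, (0:ℝ) ≤ x i * x j / D i j * (w i - w j) ^ 2 := by
        intro j hj
        have hji : j ≠ i := (Finset.mem_erase.mp hj).1
        exact mul_nonneg (div_nonneg (mul_nonneg (hx i).le (hx j).le)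
          (hDpos i j (Ne.symm hji)).le) (sq_nonneg _)
      have houter := (Finset.sum_eq_zero_iff_of_nonneg
        (fun i _ => Finset.sum_nonneg fun j hj => by
          have hji : j ≠ i := (Finset.mem_erase.mp hj).1
          exact mul_nonneg (div_nonneg (mul_nonneg (hx i).le (hx j).le)
            (hDpos i j (Ne.symm hji)).le) (sq_nonneg _))).mp hS0 i (Finset.mem_univ i)
      exact (Finset.sum_eq_zero_iff_of_nonneg hinn).mp houter
    have hw_eq : ∀ i j, i ≠ j → w i = w j := by
      intro i j hij
      have hj : j ∈ Finset.univ.erase i := Finset.mem_erase.mpr ⟨Ne.symm hij, Finset.mem_univ j⟩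
      have h := hterm i (Finset.mem_univ i) j hj
      have hc : 0 < x i * x j / D i j :=
        div_pos (mul_pos (hx i) (hx j)) (hDpos i j hij)
      have hsq0 : (w i - w j) ^ 2 = 0 := by
        rcases mul_eq_zero.mp h with h' | h'
        · exact absurd h' hc.ne'
        · exact h'
      have := pow_eq_zero_iff (n := 2) (by norm_num) |>.mp hsq0
      linarith [sub_eq_zero.mp this]
    have i0 : Fin n := ⟨0, by omega⟩
    refine ⟨w i0, ?_⟩
    funext i
    simp only [Pi.smul_apply, smul_eq_mul]
    by_cases hi : i = i0
    · rw [hi, hv i0]; ring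
    · rw [hv i, hw_eq i i0 hi]; ring
  · -- proportionality implies zero
    rintro ⟨c, rfl⟩
    have hwc : ∀ i, w i = c := by
      intro i
      have h2 : Real.sqrt (x i) * w i = Real.sqrt (x i) * c := by
        rw [← hv i]; simp [mul_comm]
      exact mul_left_cancel₀ (hspos i).ne' h2
    have hS0 : S = 0 := by
      rw [hSdef]
      refine Finset.sum_eq_zero fun i _ => Finset.sum_eq_zero fun j _ => ?_
      rw [hwc i, hwc j]; ring
    rw [key, hS0]; ring
end

section
/- With δ := min{1/Đ_ij : i ≠ j}, every nonzero eigenvalue λ of the symmetrized Maxwell-Stefan matrix A_S satisfies λ ≤ −δ; i.e. the spectrum of A_S (equivalently of A) is contained in (−∞, −δ] ∪ {0}. -/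
theorem MS_symmetrized_spectral_gap
    (n : ℕ) (hn : 2 ≤ n)
    (D : Fin n → Fin n → ℝ)
    (hDpos : ∀ i j, i ≠ j → 0 < D i j)
    (hDsymm : ∀ i j, D i j = D j i)
    (x : Fin n → ℝ) (hx : ∀ i, 0 < x i) (hxsum : ∑ i, x i = 1)
    (δ : ℝ) (hδ : IsLeast {r : ℝ | ∃ i j : Fin n, i ≠ j ∧ r = 1 / D i j} δ)
    (AS : Matrix (Fin n) (Fin n) ℝ)
    (hAS : ∀ i j, AS i j =
      if i = j then -(∑ k ∈ Finset.univ.erase i, x k / D i k)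
      else Real.sqrt (x i * x j) / D i j) :
    ∀ lam : ℝ, (∃ v : Fin n → ℝ, v ≠ 0 ∧ AS.mulVec v = lam • v) →
      lam = 0 ∨ lam ≤ -δ := by
  rintro lam ⟨v, hv0, hev⟩
  by_cases hlam : lam = 0
  · exact Or.inl hlam
  right
  set w : Fin n → ℝ := fun i => Real.sqrt (x i) with hw
  have hwpos : ∀ i, 0 < w i := fun i => Real.sqrt_pos.mpr (hx i)
  have hwsq : ∀ i, w i * w i = x i := fun i => Real.mul_self_sqrt (hx i).le
  have hsqrt : ∀ i j, Real.sqrt (x i * x j) = w i * w j := fun i j =>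
    Real.sqrt_mul (hx i).le (x j)
  have hASsymm : ∀ i j, AS i j = AS j i := by
    intro i j
    by_cases h : i = j
    · rw [h]
    · rw [hAS, hAS, if_neg h, if_neg (Ne.symm h), hDsymm i j, mul_comm]
  have hδle : ∀ i j, i ≠ j → δ ≤ 1 / D i j := fun i j hij => hδ.2 ⟨i, j, hij, rfl⟩
  -- the vector w is in the kernel of AS
  have hker : ∀ i, ∑ j, AS i j * w j = 0 := by
    intro i
    rw [← Finset.add_sum_erase _ (fun j => AS i j * w j) (Finset.mem_univ i)]
    have h1 : ∀ j ∈ Finset.univ.erase i, AS i j * w j = x j / D i j * w i := by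
      intro j hj
      have hij : i ≠ j := (Finset.ne_of_mem_erase hj).symm
      rw [hAS, if_neg hij, hsqrt]
      calc w i * w j / D i j * w j = w j * w j * (w i / D i j) := by ring
        _ = x j * (w i / D i j) := by rw [hwsq]
        _ = x j / D i j * w i := by ring
    rw [Finset.sum_congr rfl h1, hAS, if_pos rfl, ← Finset.sum_mul]
    ring
  -- eigenvector coordinates
  have hevi : ∀ i, ∑ j, AS i j * v j = lam * v i := by
    intro i
    have := congrFun hev i
    simpa [Matrix.mulVec, dotProduct] using this
  -- orthogonality to w
  have hP0 : ∑ i, w i * v i = 0 := by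
    have h1 : ∑ i, (∑ j, AS i j * v j) * w i = lam * ∑ i, w i * v i := by
      rw [Finset.mul_sum]
      exact Finset.sum_congr rfl fun i _ => by rw [hevi i]; ring
    have h2 : ∑ i, (∑ j, AS i j * v j) * w i = 0 := by
      have key : ∀ i, (∑ j, AS i j * v j) * w i = ∑ j, AS j i * w i * v j := by
        intro i
        rw [Finset.sum_mul]
        exact Finset.sum_congr rfl fun j _ => by rw [hASsymm i j]; ring
      rw [Finset.sum_congr rfl fun i _ => key i, Finset.sum_comm]
      refine Finset.sum_eq_zero fun j _ => ?_
      rw [← Finset.sum_mul, hker j, zero_mul]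
    have : lam * ∑ i, w i * v i = 0 := by rw [← h1, h2]
    exact (mul_eq_zero.mp this).resolve_left hlam
  set N : ℝ := ∑ i, v i * v i with hN
  have hNpos : 0 < N := by
    obtain ⟨i, hi⟩ := Function.ne_iff.mp hv0
    have hi' : v i ≠ 0 := hi
    exact Finset.sum_pos' (fun j _ => mul_self_nonneg (v j))
      ⟨i, Finset.mem_univ i, mul_self_pos.mpr hi'⟩
  -- the quadratic form rewritten row by row
  have hrow : ∀ i, (∑ j, AS i j * v j) * v i
      = ∑ j, (if i = j then 0 else (w i * w j * v i * v j - x j * (v i * v i)) / D i j) := by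
    intro i
    rw [← Finset.sum_erase (f := fun j => if i = j then 0
        else (w i * w j * v i * v j - x j * (v i * v i)) / D i j) Finset.univ (if_pos rfl),
      ← Finset.add_sum_erase _ (fun j => AS i j * v j) (Finset.mem_univ i), add_mul,
      Finset.sum_mul, hAS, if_pos rfl]
    have hL : -(∑ k ∈ Finset.univ.erase i, x k / D i k) * (v i * v i)
        + ∑ j ∈ Finset.univ.erase i, AS i j * v j * v i
        = ∑ j ∈ Finset.univ.erase i, (AS i j * v j * v i - x j / D i j * (v i * v i)) := by
      rw [Finset.sum_sub_distrib, ← Finset.sum_mul, ← Finset.sum_mul]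
      ring
    rw [mul_assoc, hL]
    refine Finset.sum_congr rfl fun j hj => ?_
    have hij : i ≠ j := (Finset.ne_of_mem_erase hj).symm
    rw [hAS, if_neg hij, hsqrt, if_neg hij]
    have hD : D i j ≠ 0 := (hDpos i j hij).ne'
    field_simp
  -- pairwise bound
  have hpair : ∀ i j,
      (if i = j then 0 else (w i * w j * v i * v j - x j * (v i * v i)) / D i j)
      + (if j = i then 0 else (w j * w i * v j * v i - x i * (v j * v j)) / D j i)
      ≤ -δ * (w j * v i - w i * v j) ^ 2 := by
    intro i j
    by_cases h : i = j
    · subst h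
      simp
    · rw [if_neg h, if_neg (Ne.symm h), hDsymm j i]
      have hD : 0 < D i j := hDpos i j h
      have heq : (w i * w j * v i * v j - x j * (v i * v i)) / D i j
          + (w j * w i * v j * v i - x i * (v j * v j)) / D i j
          = -((1 / D i j) * (w j * v i - w i * v j) ^ 2) := by
        rw [← hwsq i, ← hwsq j]
        field_simp
        ring
      rw [heq]
      have hsq : (0:ℝ) ≤ (w j * v i - w i * v j) ^ 2 := sq_nonneg _
      have := mul_le_mul_of_nonneg_right (hδle i j h) hsq
      linarith
  -- sum of squares identity
  have hS : ∑ i, ∑ j, (w j * v i - w i * v j) ^ 2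
      = 2 * N - 2 * (∑ i, w i * v i) ^ 2 := by
    have hpt : ∀ i j : Fin n, (w j * v i - w i * v j) ^ 2
        = v i * v i * x j + x i * (v j * v j) - 2 * ((w i * v i) * (w j * v j)) := by
      intro i j
      rw [← hwsq i, ← hwsq j]
      ring
    have hin : ∀ i : Fin n, ∑ j, (w j * v i - w i * v j) ^ 2
        = v i * v i + x i * N - 2 * ((w i * v i) * ∑ j, w j * v j) := by
      intro i
      rw [Finset.sum_congr rfl fun j _ => hpt i j, Finset.sum_sub_distrib,
        Finset.sum_add_distrib]
      simp only [← Finset.mul_sum]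
      rw [hxsum, mul_one, ← hN]
    rw [Finset.sum_congr rfl fun i _ => hin i, Finset.sum_sub_distrib, Finset.sum_add_distrib]
    simp only [← Finset.mul_sum, ← Finset.sum_mul]
    rw [hxsum, ← hN, one_mul]
    ring
  -- assemble
  have hQ : ∑ i, (∑ j, AS i j * v j) * v i = lam * N := by
    rw [hN, Finset.mul_sum]
    exact Finset.sum_congr rfl fun i _ => by rw [hevi i]; ring
  have h2Q : 2 * (lam * N) ≤ -δ * (2 * N) := by
    have e1 : 2 * (lam * N)
        = ∑ i, ∑ j, ((if i = j then 0 else (w i * w j * v i * v j - x j * (v i * v i)) / D i j)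
          + (if j = i then 0 else (w j * w i * v j * v i - x i * (v j * v j)) / D j i)) := by
      rw [Finset.sum_congr rfl fun i _ => Finset.sum_add_distrib, Finset.sum_add_distrib]
      rw [show ∑ i, ∑ j, (if j = i then 0
          else (w j * w i * v j * v i - x i * (v j * v j)) / D j i)
        = ∑ j, ∑ i, (if j = i then 0
          else (w j * w i * v j * v i - x i * (v j * v j)) / D j i) from Finset.sum_comm]
      rw [← hQ, Finset.sum_congr rfl fun i _ => (hrow i).symm]
      ring
    have e2 : ∑ i, ∑ j, ((if i = j then 0 else (w i * w j * v i * v j - x j * (v i * v i)) / D i j)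
          + (if j = i then 0 else (w j * w i * v j * v i - x i * (v j * v j)) / D j i))
        ≤ ∑ i, ∑ j, -δ * (w j * v i - w i * v j) ^ 2 :=
      Finset.sum_le_sum fun i _ => Finset.sum_le_sum fun j _ => hpair i j
    have e3 : ∑ i, ∑ j, -δ * (w j * v i - w i * v j) ^ 2 = -δ * (2 * N) := by
      simp only [← Finset.mul_sum]
      rw [hS, hP0]
      ring
    calc 2 * (lam * N) = _ := e1
      _ ≤ _ := e2
      _ = -δ * (2 * N) := e3
  nlinarith [hNpos, h2Q]
end

section
/- For each α with 0 ≤ α < δ := min{1/Đ_ij : i ≠ j}, the rank-one perturbation A_S(α) := A_S − α √x ⊗ √x is quasi-positive and irreducible, √x is a positive eigenvector of A_S(α) with eigenvalue −α, and the nonzero spectrum of A_S coincides with σ(A_S(α)) \ {−α}. -/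
theorem MS_rank_one_perturbation
    (n : ℕ) (hn : 2 ≤ n)
    (D : Fin n → Fin n → ℝ)
    (hDpos : ∀ i j, i ≠ j → 0 < D i j)
    (hDsymm : ∀ i j, D i j = D j i)
    (x : Fin n → ℝ) (hx : ∀ i, 0 < x i) (hxsum : ∑ i, x i = 1)
    (δ : ℝ) (hδ : IsLeast {r : ℝ | ∃ i j : Fin n, i ≠ j ∧ r = 1 / D i j} δ)
    (AS : Matrix (Fin n) (Fin n) ℝ)
    (hAS : ∀ i j, AS i j =
      if i = j then -(∑ k ∈ Finset.univ.erase i, x k / D i k)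
      else Real.sqrt (x i * x j) / D i j)
    (α : ℝ) (hα0 : 0 ≤ α) (hαδ : α < δ)
    (ASα : Matrix (Fin n) (Fin n) ℝ)
    (hASα : ASα = AS - α • Matrix.vecMulVec (fun i => Real.sqrt (x i))
        (fun i => Real.sqrt (x i))) :
    (∀ i j, i ≠ j → 0 ≤ ASα i j)
    ∧ (∀ I : Set (Fin n), I.Nonempty → Iᶜ.Nonempty →
        ∃ i ∈ I, ∃ j ∈ Iᶜ, ASα i j ≠ 0)
    ∧ (∀ i, 0 < Real.sqrt (x i))
    ∧ ASα.mulVec (fun i => Real.sqrt (x i)) = (-α) • (fun i => Real.sqrt (x i))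
    ∧ {lam : ℝ | lam ≠ 0 ∧ ∃ v : Fin n → ℝ, v ≠ 0 ∧ AS.mulVec v = lam • v}
      = {lam : ℝ | ∃ v : Fin n → ℝ, v ≠ 0 ∧ ASα.mulVec v = lam • v} \ {-α} := by
  set s : Fin n → ℝ := fun i => Real.sqrt (x i) with hs_def
  have hs : ∀ i, 0 < s i := fun i => Real.sqrt_pos.2 (hx i)
  have hs2 : ∀ i, s i * s i = x i := fun i => Real.mul_self_sqrt (hx i).le
  have hsij : ∀ i j, Real.sqrt (x i * x j) = s i * s j := fun i j =>
    Real.sqrt_mul (hx i).le (x j)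
  have hδle : ∀ i j, i ≠ j → δ ≤ 1 / D i j := fun i j hij => hδ.2 ⟨i, j, hij, rfl⟩
  have hδpos : 0 < δ := by
    obtain ⟨i, j, hij, hr⟩ := hδ.1
    rw [hr]
    exact one_div_pos.2 (hDpos i j hij)
  -- off-diagonal entries of ASα
  have hASα' : ∀ i j, i ≠ j → ASα i j = s i * s j * (1 / D i j - α) := by
    intro i j hij
    rw [hASα]
    simp only [Matrix.sub_apply, Matrix.smul_apply, Matrix.vecMulVec_apply, smul_eq_mul,
      hAS, if_neg hij, hsij]
    ring
  have hoff : ∀ i j, i ≠ j → 0 < ASα i j := by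
    intro i j hij
    rw [hASα' i j hij]
    have h1 : α < 1 / D i j := lt_of_lt_of_le hαδ (hδle i j hij)
    exact mul_pos (mul_pos (hs i) (hs j)) (sub_pos.2 h1)
  -- AS annihilates s
  have h0 : ∀ i, AS.mulVec s i = 0 := by
    intro i
    have hsplit : AS.mulVec s i = AS i i * s i + ∑ j ∈ Finset.univ.erase i, AS i j * s j := by
      simp only [Matrix.mulVec, dotProduct]
      exact (Finset.add_sum_erase Finset.univ (fun j => AS i j * s j) (Finset.mem_univ i)).symm
    rw [hsplit, hAS i i, if_pos rfl]
    have h2 : ∑ j ∈ Finset.univ.erase i, AS i j * s j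
        = ∑ j ∈ Finset.univ.erase i, (x j / D i j) * s i := by
      refine Finset.sum_congr rfl fun j hj => ?_
      have hij : i ≠ j := (Finset.ne_of_mem_erase hj).symm
      rw [hAS i j, if_neg hij, hsij]
      rw [div_mul_eq_mul_div, mul_assoc, hs2 j, div_mul_eq_mul_div, mul_comm (x j) (s i)]
    rw [h2, ← Finset.sum_mul]
    ring
  -- ASα mulVec formula
  have hMv : ∀ v : Fin n → ℝ, ∀ i,
      (Matrix.vecMulVec s s).mulVec v i = s i * ∑ j, s j * v j := by
    intro v i
    simp only [Matrix.mulVec, dotProduct, Matrix.vecMulVec_apply, Finset.mul_sum]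
    exact Finset.sum_congr rfl fun j _ => by ring
  have hASαmul : ∀ (v : Fin n → ℝ) (i),
      ASα.mulVec v i = AS.mulVec v i - α * (s i * ∑ j, s j * v j) := by
    intro v i
    rw [hASα, Matrix.sub_mulVec, Matrix.smul_mulVec]
    simp only [Pi.sub_apply, Pi.smul_apply, smul_eq_mul]
    rw [hMv v i]
  have hxsum' : ∑ j, s j * s j = 1 := by
    simp only [hs2]; exact hxsum
  -- eigenvector equation for s
  have heig : ASα.mulVec s = (-α) • s := by
    funext i
    rw [hASαmul s i, h0 i, hxsum']
    simp only [Pi.smul_apply, smul_eq_mul]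
    ring
  -- symmetry
  have hASsymm : ∀ i j, AS i j = AS j i := by
    intro i j
    by_cases h : i = j
    · rw [h]
    · rw [hAS i j, hAS j i, if_neg h, if_neg (Ne.symm h), hDsymm i j, mul_comm (x i) (x j)]
  have hdot : ∀ u v : Fin n → ℝ,
      ∑ i, u i * AS.mulVec v i = ∑ i, v i * AS.mulVec u i := by
    intro u v
    simp only [Matrix.mulVec, dotProduct, Finset.mul_sum]
    rw [Finset.sum_comm]
    exact Finset.sum_congr rfl fun i _ => Finset.sum_congr rfl fun j _ => by
      rw [hASsymm j i]; ring
  have hASαsymm : ∀ i j, ASα i j = ASα j i := by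
    intro i j
    rw [hASα]
    simp only [Matrix.sub_apply, Matrix.smul_apply, Matrix.vecMulVec_apply, smul_eq_mul]
    rw [hASsymm i j]; ring
  have hdotα : ∀ u v : Fin n → ℝ,
      ∑ i, u i * ASα.mulVec v i = ∑ i, v i * ASα.mulVec u i := by
    intro u v
    simp only [Matrix.mulVec, dotProduct, Finset.mul_sum]
    rw [Finset.sum_comm]
    exact Finset.sum_congr rfl fun i _ => Finset.sum_congr rfl fun j _ => by
      rw [hASαsymm j i]; ring
  -- antisymmetric double sums vanish
  have hanti : ∀ f : Fin n → Fin n → ℝ, (∀ i j, f j i = - f i j) →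
      ∑ i, ∑ j, f i j = 0 := by
    intro f hf
    have h1 : (∑ i, ∑ j, f i j) = ∑ i, ∑ j, f j i := Finset.sum_comm
    have h2 : (∑ i, ∑ j, f j i) = -∑ i, ∑ j, f i j := by
      rw [← Finset.sum_neg_distrib]
      exact Finset.sum_congr rfl fun i _ => by
        rw [← Finset.sum_neg_distrib]
        exact Finset.sum_congr rfl fun j _ => hf i j
    linarith [h1, h2]
  -- quadratic form identity
  have hquad : ∀ v : Fin n → ℝ, ∑ i, v i * AS.mulVec v i
      = -(1/2) * ∑ i, ∑ j, (if i = j then 0 else (s j * v i - s i * v j)^2 / D i j) := by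
    intro v
    have hterm : ∀ i, v i * AS.mulVec v i
        = ∑ j, (if i = j then 0 else (s i * s j * (v i * v j) - x j * v i^2) / D i j) := by
      intro i
      have hsplit : v i * AS.mulVec v i
          = v i * (AS i i * v i) + ∑ j ∈ Finset.univ.erase i, v i * (AS i j * v j) := by
        simp only [Matrix.mulVec, dotProduct, Finset.mul_sum]
        exact (Finset.add_sum_erase Finset.univ (fun j => v i * (AS i j * v j))
          (Finset.mem_univ i)).symm
      rw [hsplit, hAS i i, if_pos rfl,
        ← Finset.add_sum_erase Finset.univ
          (fun j => (if i = j then 0 else (s i * s j * (v i * v j) - x j * v i^2) / D i j))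
          (Finset.mem_univ i)]
      simp only [eq_self_iff_true, if_true, zero_add]
      have hdiag : v i * (-(∑ k ∈ Finset.univ.erase i, x k / D i k) * v i)
          = ∑ k ∈ Finset.univ.erase i, -(x k / D i k * v i ^ 2) := by
        rw [Finset.sum_neg_distrib, ← Finset.sum_mul]
        ring
      rw [hdiag, ← Finset.sum_add_distrib]
      refine Finset.sum_congr rfl fun j hj => ?_
      have hij : i ≠ j := (Finset.ne_of_mem_erase hj).symm
      rw [hAS i j, if_neg hij, hsij, if_neg hij]
      have hD := (hDpos i j hij).ne'
      field_simp
      ring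
    rw [Finset.sum_congr rfl fun i _ => hterm i]
    have hGH : ∀ i j, (if i = j then 0 else (s i * s j * (v i * v j) - x j * v i^2) / D i j)
        = -(1/2) * (if i = j then 0 else (s j * v i - s i * v j)^2 / D i j)
          + (if i = j then (0:ℝ) else (x i * v j^2 - x j * v i^2) / (2 * D i j)) := by
      intro i j
      by_cases h : i = j
      · simp [h]
      · simp only [if_neg h]
        have hD := (hDpos i j h).ne'
        rw [← hs2 i, ← hs2 j]
        field_simp
        ring
    rw [Finset.sum_congr rfl fun i _ => Finset.sum_congr rfl fun j _ => hGH i j]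
    have hzero : ∑ i, ∑ j, (if i = j then (0:ℝ) else (x i * v j^2 - x j * v i^2) / (2 * D i j))
        = 0 := by
      apply hanti
      intro i j
      by_cases h : i = j
      · simp [h]
      · rw [if_neg (Ne.symm h), if_neg h, hDsymm j i]
        ring
    simp only [Finset.sum_add_distrib, ← Finset.mul_sum]
    rw [hzero]
    ring
  -- norm identity
  have hnorm : ∀ v : Fin n → ℝ, ∑ i, ∑ j, (s j * v i - s i * v j)^2
      = 2 * (∑ i, v i^2) - 2 * (∑ i, s i * v i)^2 := by
    intro v
    have expand : ∀ i j, (s j * v i - s i * v j)^2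
        = v i^2 * x j + x i * v j^2 - 2 * ((s i * v i) * (s j * v j)) := by
      intro i j
      rw [← hs2 i, ← hs2 j]
      ring
    rw [Finset.sum_congr rfl fun i _ => Finset.sum_congr rfl fun j _ => expand i j]
    simp only [Finset.sum_sub_distrib, Finset.sum_add_distrib, ← Finset.mul_sum]
    simp only [← Finset.sum_mul]
    rw [hxsum]
    ring
  -- pointwise bound
  have hineq : ∀ v : Fin n → ℝ,
      δ * (∑ i, ∑ j, (s j * v i - s i * v j)^2)
        ≤ ∑ i, ∑ j, (if i = j then 0 else (s j * v i - s i * v j)^2 / D i j) := by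
    intro v
    rw [Finset.mul_sum]
    refine Finset.sum_le_sum fun i _ => ?_
    rw [Finset.mul_sum]
    refine Finset.sum_le_sum fun j _ => ?_
    by_cases h : i = j
    · subst h
      rw [if_pos rfl]
      have : s i * v i - s i * v i = 0 := sub_self _
      rw [this]
      norm_num
    · rw [if_neg h]
      have h1 : δ ≤ 1 / D i j := hδle i j h
      have h2 : (0:ℝ) ≤ (s j * v i - s i * v j)^2 := sq_nonneg _
      calc δ * (s j * v i - s i * v j)^2 ≤ (1 / D i j) * (s j * v i - s i * v j)^2 :=
            mul_le_mul_of_nonneg_right h1 h2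
        _ = (s j * v i - s i * v j)^2 / D i j := by rw [one_div, inv_mul_eq_div]
  -- the spectral gap bound
  have hbound : ∀ v : Fin n → ℝ, (∑ i, s i * v i) = 0 →
      ∑ i, v i * AS.mulVec v i ≤ -δ * ∑ i, v i^2 := by
    intro v hc
    have hq := hquad v
    have hn' := hnorm v
    have hi := hineq v
    rw [hc] at hn'
    have hδT : δ * (∑ i, ∑ j, (s j * v i - s i * v j)^2) = 2 * (δ * ∑ i, v i^2) := by
      rw [hn']; ring
    rw [hδT] at hi
    linarith [hq, hi]
  have hVpos : ∀ v : Fin n → ℝ, v ≠ 0 → 0 < ∑ i, v i^2 := by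
    intro v hv
    obtain ⟨i, hi⟩ : ∃ i, v i ≠ 0 := by
      by_contra h
      push_neg at h
      exact hv (funext h)
    exact Finset.sum_pos' (fun j _ => sq_nonneg _)
      ⟨i, Finset.mem_univ i, by positivity⟩
  refine ⟨fun i j hij => (hoff i j hij).le, ?_, hs, heig, ?_⟩
  · intro I hI hIc
    obtain ⟨i, hi⟩ := hI
    obtain ⟨j, hj⟩ := hIc
    have hij : i ≠ j := fun h => hj (h ▸ hi)
    exact ⟨i, hi, j, hj, (hoff i j hij).ne'⟩
  · ext lam
    simp only [Set.mem_setOf_eq, Set.mem_diff, Set.mem_singleton_iff]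
    constructor
    · rintro ⟨hlam, v, hv, hev⟩
      have hc : ∑ i, s i * v i = 0 := by
        have h1 : ∑ i, s i * AS.mulVec v i = lam * ∑ i, s i * v i := by
          rw [hev]
          rw [Finset.mul_sum]
          exact Finset.sum_congr rfl fun i _ => by
            simp only [Pi.smul_apply, smul_eq_mul]; ring
        have h2 : ∑ i, s i * AS.mulVec v i = 0 := by
          rw [hdot s v]
          exact Finset.sum_eq_zero fun i _ => by rw [h0 i, mul_zero]
        have := h1.symm.trans h2
        exact (mul_eq_zero.1 this).resolve_left hlam
      have hVa : ∑ i, v i * AS.mulVec v i = lam * ∑ i, v i^2 := by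
        rw [hev, Finset.mul_sum]
        exact Finset.sum_congr rfl fun i _ => by
          simp only [Pi.smul_apply, smul_eq_mul]; ring
      have hle : lam ≤ -δ := by
        have hb := hbound v hc
        rw [hVa] at hb
        have hV := hVpos v hv
        nlinarith
      refine ⟨⟨v, hv, ?_⟩, ?_⟩
      · funext i
        rw [hASαmul v i, hc]
        have := congrFun hev i
        rw [this]
        simp only [Pi.smul_apply, smul_eq_mul]
        ring
      · intro h
        rw [h] at hle
        linarith
    · rintro ⟨⟨v, hv, hev⟩, hne⟩
      have hc : ∑ i, s i * v i = 0 := by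
        have h1 : ∑ i, s i * ASα.mulVec v i = lam * ∑ i, s i * v i := by
          rw [hev, Finset.mul_sum]
          exact Finset.sum_congr rfl fun i _ => by
            simp only [Pi.smul_apply, smul_eq_mul]; ring
        have h2 : ∑ i, s i * ASα.mulVec v i = -α * ∑ i, s i * v i := by
          rw [hdotα s v, Finset.mul_sum]
          refine Finset.sum_congr rfl fun i _ => ?_
          rw [congrFun heig i]
          simp only [Pi.smul_apply, smul_eq_mul]
          ring
        have h3 : (lam + α) * (∑ i, s i * v i) = 0 := by
          have := h1.symm.trans h2
          linarith [this]
        rcases mul_eq_zero.1 h3 with h | h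
        · exact absurd (by linarith : lam = -α) hne
        · exact h
      have hevAS : AS.mulVec v = lam • v := by
        funext i
        have := hASαmul v i
        rw [hc, congrFun hev i] at this
        simp only [Pi.smul_apply, smul_eq_mul] at this ⊢
        linarith [this]
      have hVa : ∑ i, v i * AS.mulVec v i = lam * ∑ i, v i^2 := by
        rw [hevAS, Finset.mul_sum]
        exact Finset.sum_congr rfl fun i _ => by
          simp only [Pi.smul_apply, smul_eq_mul]; ring
      have hle : lam ≤ -δ := by
        have hb := hbound v hc
        rw [hVa] at hb
        have hV := hVpos v hv
        nlinarith
      exact ⟨by linarith, v, hv, hevAS⟩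
end

section
/- Let A be a real n×n quasi-positive irreducible matrix. Then the spectral bound s(A) = max{Re λ : λ ∈ σ(A)} is a simple eigenvalue of A possessing a strictly positive eigenvector, and Re λ < s(A) for every other eigenvalue λ of A. -/
lemma pf_pow_nonneg {n : ℕ} (B : Matrix (Fin n) (Fin n) ℝ)
    (hB : ∀ i j, 0 ≤ B i j) (k : ℕ) : ∀ i j, 0 ≤ (B ^ k) i j := by
  induction k with
  | zero => intro i j; by_cases h : i = j <;> simp [pow_zero, Matrix.one_apply, h]
  | succ k ih =>
    intro i j
    rw [pow_succ, Matrix.mul_apply]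
    exact Finset.sum_nonneg fun l _ => mul_nonneg (ih i l) (hB l j)

lemma pf_pow_pos {n : ℕ} (B : Matrix (Fin n) (Fin n) ℝ)
    (hB : ∀ i j, 0 ≤ B i j) (hBd : ∀ i, 0 < B i i)
    (hirr : ∀ I : Set (Fin n), I.Nonempty → Iᶜ.Nonempty →
      ∃ i ∈ I, ∃ j ∈ Iᶜ, 0 < B i j) :
    ∀ i j, 0 < (B ^ (n - 1)) i j := by
  intro i
  set T : ℕ → Finset (Fin n) := fun k => Finset.univ.filter (fun j => 0 < (B ^ k) i j) with hT
  have hmemT : ∀ k j, j ∈ T k ↔ 0 < (B ^ k) i j := by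
    intro k j; simp [hT]
  have hstep : ∀ k l j, l ∈ T k → 0 < B l j → j ∈ T (k + 1) := by
    intro k l j hl hpos
    rw [hmemT] at hl ⊢
    rw [pow_succ, Matrix.mul_apply]
    have : 0 < (B ^ k) i l * B l j := mul_pos hl hpos
    refine Finset.sum_pos' (fun m _ => mul_nonneg (pf_pow_nonneg B hB k i m) (hB m j)) ⟨l, Finset.mem_univ l, this⟩
  have hmono : ∀ k, T k ⊆ T (k + 1) := by
    intro k j hj
    exact hstep k j j hj (hBd j)
  have hTi : ∀ k, i ∈ T k := by
    intro k
    induction k with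
    | zero => rw [hmemT]; simp [pow_zero, Matrix.one_apply]
    | succ k ih => exact hmono k ih
  have hcard : ∀ k, min n (k + 1) ≤ (T k).card := by
    intro k
    induction k with
    | zero =>
      have : 0 < (T 0).card := Finset.card_pos.mpr ⟨i, hTi 0⟩
      omega

    | succ k ih =>
      by_cases hfull : n ≤ (T k).card
      · have := Finset.card_le_card (hmono k)
        omega
      · -- T k is not everything
        have hne : (↑(T k) : Set (Fin n)).Nonempty := ⟨i, hTi k⟩
        have hcne : ((↑(T k) : Set (Fin n))ᶜ).Nonempty := by
          by_contra h
          rw [Set.not_nonempty_iff_eq_empty, Set.compl_empty_iff] at h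
          have : (T k) = Finset.univ := by
            apply Finset.eq_univ_of_forall
            intro x
            have : x ∈ (↑(T k) : Set (Fin n)) := h ▸ Set.mem_univ x
            exact this
          rw [this, Finset.card_univ, Fintype.card_fin] at hfull
          omega
        obtain ⟨l, hl, j, hj, hpos⟩ := hirr _ hne hcne
        have hjT : j ∈ T (k + 1) := hstep k l j hl hpos
        have hjnT : j ∉ T k := hj
        have hsub : insert j (T k) ⊆ T (k + 1) := by
          intro x hx
          rcases Finset.mem_insert.mp hx with h | h
          · exact h ▸ hjT
          · exact hmono k h
        have := Finset.card_le_card hsub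
        rw [Finset.card_insert_of_notMem hjnT] at this
        omega
  intro j
  have h1 : min n (n - 1 + 1) ≤ (T (n - 1)).card := hcard (n - 1)
  have hn' : (T (n-1)).card ≤ n := by
    simpa using Finset.card_le_univ (T (n-1))
  by_cases hn : n = 0
  · exact absurd (Fin.pos i) (by omega)
  · have : (T (n-1)).card = n := by omega
    have huniv : T (n - 1) = Finset.univ := Finset.eq_univ_of_card _ (by simpa using this)
    have : j ∈ T (n - 1) := huniv ▸ Finset.mem_univ j
    exact (hmemT _ j).mp this

lemma pf_pow_eig {n : ℕ} (B : Matrix (Fin n) (Fin n) ℝ) (x : Fin n → ℝ) (t : ℝ)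
    (h : B.mulVec x = t • x) (k : ℕ) : (B ^ k).mulVec x = t ^ k • x := by
  induction k with
  | zero => simp [Matrix.one_mulVec]
  | succ k ih =>
    rw [pow_succ', ← Matrix.mulVec_mulVec, ih, Matrix.mulVec_smul, h, smul_smul, ← pow_succ]

lemma pf_cw {n : ℕ} (hn : 1 ≤ n) (B : Matrix (Fin n) (Fin n) ℝ)
    (hB : ∀ i j, 0 ≤ B i j) (hBd : ∀ i, 0 < B i i)
    (hirr : ∀ I : Set (Fin n), I.Nonempty → Iᶜ.Nonempty →
      ∃ i ∈ I, ∃ j ∈ Iᶜ, 0 < B i j) :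
    ∃ t : ℝ, ∃ x : Fin n → ℝ, (∀ i, 0 < x i) ∧ B.mulVec x = t • x ∧
      (∀ s : ℝ, 0 ≤ s → ∀ y : Fin n → ℝ, (∀ i, 0 ≤ y i) → y ≠ 0 →
        (∀ i, s * y i ≤ B.mulVec y i) → s ≤ t) := by
  have hNE : Nonempty (Fin n) := ⟨⟨0, by omega⟩⟩
  set M : ℝ := ∑ i, ∑ j, B i j with hM
  have hM0 : 0 ≤ M := Finset.sum_nonneg fun i _ => Finset.sum_nonneg fun j _ => hB i j
  set K : Set (ℝ × (Fin n → ℝ)) :=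
    {p | p.1 ∈ Set.Icc 0 M ∧ (∀ i, 0 ≤ p.2 i) ∧ (∑ i, p.2 i) = 1 ∧
      ∀ i, p.1 * p.2 i ≤ B.mulVec p.2 i} with hK
  -- membership of normalized vectors
  have hKmem : ∀ s : ℝ, 0 ≤ s → ∀ y : Fin n → ℝ, (∀ i, 0 ≤ y i) → y ≠ 0 →
      (∀ i, s * y i ≤ B.mulVec y i) → (s, (∑ i, y i)⁻¹ • y) ∈ K := by
    intro s hs y hy hy0 hsy
    obtain ⟨j0, hj0⟩ : ∃ j, 0 < y j := by
      by_contra h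
      push_neg at h
      exact hy0 (funext fun j => le_antisymm (h j) (hy j))
    have hσ : 0 < ∑ i, y i :=
      Finset.sum_pos' (fun i _ => hy i) ⟨j0, Finset.mem_univ j0, hj0⟩
    set σ := ∑ i, y i
    have hx'nn : ∀ i, 0 ≤ (σ⁻¹ • y) i := fun i =>
      mul_nonneg (inv_nonneg.mpr hσ.le) (hy i)
    have hx'sum : (∑ i, (σ⁻¹ • y) i) = 1 := by
      simp only [Pi.smul_apply, smul_eq_mul, ← Finset.mul_sum]
      exact inv_mul_cancel₀ hσ.ne'
    have hx'le : ∀ i, s * (σ⁻¹ • y) i ≤ B.mulVec (σ⁻¹ • y) i := by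
      intro i
      rw [Matrix.mulVec_smul]
      simp only [Pi.smul_apply, smul_eq_mul]
      rw [mul_left_comm]
      exact mul_le_mul_of_nonneg_left (hsy i) (inv_nonneg.mpr hσ.le)
    have hx'ub : ∀ i, (σ⁻¹ • y) i ≤ 1 := by
      intro i
      rw [← hx'sum]
      exact Finset.single_le_sum (fun j _ => hx'nn j) (Finset.mem_univ i)
    refine ⟨⟨hs, ?_⟩, hx'nn, hx'sum, hx'le⟩
    -- s ≤ M
    calc s = s * ∑ i, (σ⁻¹ • y) i := by rw [hx'sum, mul_one]
    _ = ∑ i, s * (σ⁻¹ • y) i := by rw [Finset.mul_sum]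
    _ ≤ ∑ i, B.mulVec (σ⁻¹ • y) i := Finset.sum_le_sum fun i _ => hx'le i
    _ = ∑ i, ∑ j, B i j * (σ⁻¹ • y) j := by
        refine Finset.sum_congr rfl fun i _ => ?_
        rfl
    _ ≤ ∑ i, ∑ j, B i j := by
        refine Finset.sum_le_sum fun i _ => Finset.sum_le_sum fun j _ => ?_
        calc B i j * (σ⁻¹ • y) j ≤ B i j * 1 :=
              mul_le_mul_of_nonneg_left (hx'ub j) (hB i j)
        _ = B i j := mul_one _
  -- compactness
  have hclosed : IsClosed K := by
    have hmv : Continuous fun p : ℝ × (Fin n → ℝ) => B.mulVec p.2 := by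
      have : Continuous fun v : Fin n → ℝ => B.mulVec v := by
        have := (Matrix.mulVecLin B).continuous_of_finiteDimensional
        exact this
      exact this.comp continuous_snd
    have h1 : IsClosed {p : ℝ × (Fin n → ℝ) | p.1 ∈ Set.Icc 0 M} :=
      isClosed_Icc.preimage continuous_fst
    have h2 : IsClosed {p : ℝ × (Fin n → ℝ) | ∀ i, 0 ≤ p.2 i} := by
      have : {p : ℝ × (Fin n → ℝ) | ∀ i, 0 ≤ p.2 i} = ⋂ i, {p | 0 ≤ p.2 i} := by
        ext p; simp
      rw [this]
      exact isClosed_iInter fun i =>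
        isClosed_le continuous_const ((continuous_apply i).comp continuous_snd)
    have h3 : IsClosed {p : ℝ × (Fin n → ℝ) | (∑ i, p.2 i) = 1} :=
      isClosed_eq (by fun_prop) continuous_const
    have h4 : IsClosed {p : ℝ × (Fin n → ℝ) | ∀ i, p.1 * p.2 i ≤ B.mulVec p.2 i} := by
      have : {p : ℝ × (Fin n → ℝ) | ∀ i, p.1 * p.2 i ≤ B.mulVec p.2 i} =
          ⋂ i, {p | p.1 * p.2 i ≤ B.mulVec p.2 i} := by ext p; simp
      rw [this]
      exact isClosed_iInter fun i =>
        isClosed_le (continuous_fst.mul ((continuous_apply i).comp continuous_snd))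
          ((continuous_apply i).comp hmv)
    have : K = _ ∩ (_ ∩ (_ ∩ _)) := rfl
    exact h1.inter (h2.inter (h3.inter h4))
  have hsub : K ⊆ Set.Icc (⟨0, 0⟩ : ℝ × (Fin n → ℝ)) ⟨M, 1⟩ := by
    rintro ⟨s, x⟩ ⟨hs, hx, hsum, _⟩
    constructor
    · exact ⟨hs.1, fun i => hx i⟩
    · refine ⟨hs.2, fun i => ?_⟩
      calc x i ≤ ∑ j, x j := Finset.single_le_sum (fun j _ => hx j) (Finset.mem_univ i)
      _ = 1 := hsum
  have hcomp : IsCompact K := (isCompact_Icc).of_isClosed_subset hclosed hsub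
  have hKne : K.Nonempty := by
    refine ⟨⟨0, fun _ => (n : ℝ)⁻¹⟩, ⟨le_refl 0, hM0⟩, ?_, ?_, ?_⟩
    · intro i; positivity
    · simp [Finset.sum_const, Finset.card_univ]
      rw [mul_inv_cancel₀ (by positivity : (n:ℝ) ≠ 0)]
    · intro i
      simp only [zero_mul]
      show (0:ℝ) ≤ ∑ j, B i j * (n : ℝ)⁻¹
      exact Finset.sum_nonneg fun j _ => mul_nonneg (hB i j) (by positivity)
  obtain ⟨p, hpK, hmax⟩ := hcomp.exists_isMaxOn hKne continuous_fst.continuousOn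
  obtain ⟨⟨ht0, htM⟩, hxnn, hxsum, hxle⟩ := hpK
  set t := p.1
  set x := p.2
  -- the CW bound
  have hCW : ∀ s : ℝ, 0 ≤ s → ∀ y : Fin n → ℝ, (∀ i, 0 ≤ y i) → y ≠ 0 →
      (∀ i, s * y i ≤ B.mulVec y i) → s ≤ t := by
    intro s hs y hy hy0 hsy
    exact hmax (hKmem s hs y hy hy0 hsy)
  -- positivity matrix
  set P := B ^ (n - 1) with hPdef
  have hP : ∀ i j, 0 < P i j := pf_pow_pos B hB hBd hirr
  have hPnn : ∀ i j, 0 ≤ P i j := fun i j => (hP i j).le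
  obtain ⟨j0, hj0⟩ : ∃ j, 0 < x j := by
    by_contra h
    push_neg at h
    have : (∑ i, x i) = 0 := Finset.sum_eq_zero fun i _ => le_antisymm (h i) (hxnn i)
    rw [hxsum] at this; norm_num at this
  -- the maximizer is an eigenvector
  have heig : B.mulVec x = t • x := by
    by_contra hne
    set z := B.mulVec x - t • x with hzdef
    have hznn : ∀ i, 0 ≤ z i := fun i => sub_nonneg.mpr (hxle i)
    have hz0 : z ≠ 0 := fun h => hne (by rwa [sub_eq_zero] at h)
    obtain ⟨j1, hj1⟩ : ∃ j, 0 < z j := by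
      obtain ⟨j, hj⟩ := Function.ne_iff.mp hz0
      exact ⟨j, lt_of_le_of_ne (hznn j) (Ne.symm hj)⟩
    set u := P.mulVec x with hudef
    have hu : ∀ i, 0 < u i := fun i =>
      Finset.sum_pos' (fun j _ => mul_nonneg (hPnn i j) (hxnn j))
        ⟨j0, Finset.mem_univ j0, mul_pos (hP i j0) hj0⟩
    have hPz : ∀ i, 0 < P.mulVec z i := fun i =>
      Finset.sum_pos' (fun j _ => mul_nonneg (hPnn i j) (hznn j))
        ⟨j1, Finset.mem_univ j1, mul_pos (hP i j1) hj1⟩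
    have hcomm : B * P = P * B := ((Commute.refl B).pow_right (n-1)).eq
    have hBu : B.mulVec u = t • u + P.mulVec z := by
      rw [hudef, Matrix.mulVec_mulVec, hcomm, ← Matrix.mulVec_mulVec]
      have : B.mulVec x = t • x + z := by rw [hzdef]; abel
      rw [this, Matrix.mulVec_add, Matrix.mulVec_smul]
    set ε := Finset.univ.inf' (Finset.univ_nonempty) (fun i => P.mulVec z i / u i) with hε
    have hεpos : 0 < ε := by
      rw [hε, Finset.lt_inf'_iff]
      exact fun i _ => div_pos (hPz i) (hu i)
    have hub : ∀ i, (t + ε) * u i ≤ B.mulVec u i := by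
      intro i
      rw [hBu]
      have h1 : ε * u i ≤ P.mulVec z i := by
        have := Finset.inf'_le (fun i => P.mulVec z i / u i) (Finset.mem_univ i)
        calc ε * u i ≤ (P.mulVec z i / u i) * u i :=
              mul_le_mul_of_nonneg_right this (hu i).le
        _ = P.mulVec z i := div_mul_cancel₀ _ (hu i).ne'
      simp only [Pi.add_apply, Pi.smul_apply, smul_eq_mul]
      nlinarith [hu i]
    have hu0 : u ≠ 0 := by
      intro h
      exact absurd (congrFun h j0) (hu j0).ne'
    have := hmax (hKmem (t + ε) (by linarith) u (fun i => (hu i).le) hu0 hub)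
    simp only at this
    have : t + ε ≤ t := this
    linarith
  -- positivity of x
  have hPx : P.mulVec x = t ^ (n - 1) • x := pf_pow_eig B x t heig (n - 1)
  have hxpos : ∀ i, 0 < x i := by
    intro i
    have h1 : 0 < P.mulVec x i :=
      Finset.sum_pos' (fun j _ => mul_nonneg (hPnn i j) (hxnn j))
        ⟨j0, Finset.mem_univ j0, mul_pos (hP i j0) hj0⟩
    rw [hPx] at h1
    simp only [Pi.smul_apply, smul_eq_mul] at h1
    rcases lt_or_eq_of_le (hxnn i) with h | h
    · exact h
    · exfalso; rw [← h, mul_zero] at h1; exact lt_irrefl 0 h1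
  exact ⟨t, x, hxpos, heig, hCW⟩


open Matrix Polynomial

variable {n : ℕ} {R : Type*} [CommRing R]

lemma pf_eval_charpoly (A : Matrix (Fin n) (Fin n) R) (s : R) :
    A.charpoly.eval s = (s • (1 : Matrix (Fin n) (Fin n) R) - A).det := by
  rw [Matrix.charpoly, ← Polynomial.coe_evalRingHom, RingHom.map_det]
  congr 1
  ext i j
  by_cases h : i = j
  · subst h
    simp [charmatrix_apply_eq, Matrix.one_apply]
  · simp [charmatrix_apply_ne _ _ _ h, Matrix.one_apply_ne h, h]

lemma pf_charpoly_transpose (A : Matrix (Fin n) (Fin n) R) :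
    Aᵀ.charpoly = A.charpoly := by
  rw [Matrix.charpoly, Matrix.charpoly, ← Matrix.det_transpose (charmatrix A)]
  congr 1
  ext i j
  by_cases h : i = j
  · subst h
    simp [charmatrix_apply_eq]
  · rw [Matrix.transpose_apply, charmatrix_apply_ne _ _ _ h,
      charmatrix_apply_ne _ _ _ (Ne.symm h), Matrix.transpose_apply]

lemma pf_charpoly_shift (A : Matrix (Fin n) (Fin n) R) (s : R) :
    (A - s • (1 : Matrix (Fin n) (Fin n) R)).charpoly = A.charpoly.comp (X + C s) := by
  have hc : A.charpoly.comp (X + C s) = (aeval (X + C s)).toRingHom A.charpoly := by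
    simp [Polynomial.comp, Polynomial.aeval_def, Polynomial.eval₂_def, Polynomial.algebraMap_eq]
  rw [hc, Matrix.charpoly, Matrix.charpoly, RingHom.map_det]
  congr 1
  apply Matrix.ext
  intro i j
  rw [RingHom.mapMatrix_apply]
  by_cases h : i = j
  · subst h
    simp only [Matrix.map_apply, charmatrix_apply_eq, Matrix.sub_apply, Matrix.smul_apply,
      Matrix.one_apply_eq, smul_eq_mul, mul_one, map_sub, AlgHom.toRingHom_eq_coe,
      RingHom.coe_coe, aeval_X, aeval_C, algebraMap_eq, Matrix.map_apply]
    ring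
  · simp only [Matrix.map_apply, charmatrix_apply_ne _ _ _ h, Matrix.sub_apply,
      Matrix.smul_apply, Matrix.one_apply_ne h, smul_eq_mul, mul_zero, sub_zero, map_neg,
      AlgHom.toRingHom_eq_coe, RingHom.coe_coe, aeval_C, algebraMap_eq, Matrix.map_apply]

lemma pf_toLin'_pow (N : Matrix (Fin n) (Fin n) ℝ) (k : ℕ) (x : Fin n → ℝ) :
    ((Matrix.toLin' N) ^ k) x = (N ^ k).mulVec x := by
  induction k generalizing x with
  | zero => simp [Matrix.one_mulVec]
  | succ k ih =>
    rw [pow_succ, Module.End.mul_apply, ih, Matrix.toLin'_apply, Matrix.mulVec_mulVec, ← pow_succ]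

lemma pf_rootMultiplicity (A : Matrix (Fin n) (Fin n) ℝ) (s : ℝ) (w : Fin n → ℝ)
    (hw : w ≠ 0) (hew : (A - s • 1).mulVec w = 0)
    (hker : ∀ x : Fin n → ℝ, ∀ k : ℕ, 1 ≤ k → ((A - s • 1) ^ k).mulVec x = 0 → ∃ r : ℝ, x = r • w) :
    A.charpoly.rootMultiplicity s = 1 := by
  set N := A - s • (1 : Matrix (Fin n) (Fin n) ℝ) with hN
  have h1 : A.charpoly.rootMultiplicity s = N.charpoly.natTrailingDegree := by
    rw [Polynomial.rootMultiplicity_eq_natTrailingDegree, hN, pf_charpoly_shift]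
  have h2 : N.charpoly = (Matrix.toLin' N).charpoly := by
    rw [← LinearMap.charpoly_toMatrix (Matrix.toLin' N) (Pi.basisFun ℝ (Fin n)),
      LinearMap.toMatrix_eq_toMatrix', LinearMap.toMatrix'_toLin']
  have h3 : Module.End.maxGenEigenspace (Matrix.toLin' N) 0 = Submodule.span ℝ {w} := by
    ext x
    rw [Module.End.mem_maxGenEigenspace, Submodule.mem_span_singleton]
    constructor
    · rintro ⟨k, hk⟩
      simp only [zero_smul, sub_zero] at hk
      rw [pf_toLin'_pow] at hk
      rcases Nat.eq_zero_or_pos k with h | h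
      · subst h
        rw [pow_zero, Matrix.one_mulVec] at hk
        exact ⟨0, by rw [hk, zero_smul]⟩
      · obtain ⟨r, hr⟩ := hker x k h hk
        exact ⟨r, hr.symm⟩
    · rintro ⟨r, rfl⟩
      refine ⟨1, ?_⟩
      simp only [zero_smul, sub_zero, pow_one]
      rw [Matrix.toLin'_apply, Matrix.mulVec_smul, hew, smul_zero]
  have h4 := LinearMap.finrank_maxGenEigenspace_zero_eq (Matrix.toLin' N)
  rw [h3, finrank_span_singleton hw] at h4
  rw [h1, h2, ← h4]


open Matrix Polynomial Finset

lemma pf_dom {n : ℕ} (A B : Matrix (Fin n) (Fin n) ℝ) (c t : ℝ)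
    (hBeq : B = A + c • 1)
    (hCW : ∀ s : ℝ, 0 ≤ s → ∀ y : Fin n → ℝ, (∀ i, 0 ≤ y i) → y ≠ 0 →
        (∀ i, s * y i ≤ B.mulVec y i) → s ≤ t)
    (hB : ∀ i j, 0 ≤ B i j)
    (lam : ℂ) (hroot : ((A.map Complex.ofReal).charpoly).IsRoot lam) :
    ‖(lam + c)‖ ≤ t := by
  have hdet : (lam • (1 : Matrix (Fin n) (Fin n) ℂ) - A.map Complex.ofReal).det = 0 := by
    rw [← pf_eval_charpoly]; exact hroot
  obtain ⟨v, hv0, hv⟩ := (Matrix.exists_mulVec_eq_zero_iff).mpr hdet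
  have hAv : (A.map Complex.ofReal).mulVec v = lam • v := by
    rw [Matrix.sub_mulVec] at hv
    have := sub_eq_zero.mp hv
    rw [← this, Matrix.smul_mulVec, Matrix.one_mulVec]
  have hBmap : B.map Complex.ofReal = A.map Complex.ofReal + (c : ℂ) • 1 := by
    ext i j
    by_cases h : i = j
    · subst h; simp [hBeq, Matrix.one_apply, Matrix.map_apply]
    · simp [hBeq, Matrix.one_apply_ne h, Matrix.map_apply, h]
  have hBv : (B.map Complex.ofReal).mulVec v = (lam + (c : ℂ)) • v := by
    rw [hBmap, Matrix.add_mulVec, hAv, Matrix.smul_mulVec, Matrix.one_mulVec, add_smul]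
  set u : Fin n → ℝ := fun i => ‖(v i)‖ with hu
  have hunn : ∀ i, 0 ≤ u i := fun i => norm_nonneg _
  have hu0 : u ≠ 0 := by
    intro h
    apply hv0
    funext i
    have : u i = 0 := congrFun h i
    rw [hu] at this
    exact norm_eq_zero.mp this
  have hkey : ∀ i, ‖(lam + c)‖ * u i ≤ B.mulVec u i := by
    intro i
    have h1 : (lam + (c:ℂ)) * v i = ∑ j, ((B i j : ℝ) : ℂ) * v j := by
      have := congrFun hBv i
      simp only [Matrix.mulVec, dotProduct, Matrix.map_apply, Pi.smul_apply,
        smul_eq_mul] at this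
      rw [← this]
    calc ‖(lam + c)‖ * u i = ‖((lam + (c:ℂ)) * v i)‖ := by
          rw [norm_mul]
    _ = ‖(∑ j, ((B i j : ℝ) : ℂ) * v j)‖ := by rw [h1]
    _ ≤ ∑ j, ‖(((B i j : ℝ) : ℂ) * v j)‖ := norm_sum_le _ _
    _ = ∑ j, B i j * u j := by
          refine Finset.sum_congr rfl fun j _ => ?_
          rw [norm_mul, Complex.norm_real, Real.norm_eq_abs, abs_of_nonneg (hB i j)]
    _ = B.mulVec u i := rfl
  exact hCW _ (norm_nonneg _) u hunn hu0 hkey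

/-- Perron-Frobenius theorem for quasi-positive irreducible matrices. -/
theorem perron_frobenius_quasipositive
    (n : ℕ) (hn : 1 ≤ n)
    (A : Matrix (Fin n) (Fin n) ℝ)
    (hquasi : ∀ i j, i ≠ j → 0 ≤ A i j)
    (hirr : ∀ I : Set (Fin n), I.Nonempty → Iᶜ.Nonempty →
      ∃ i ∈ I, ∃ j ∈ Iᶜ, A i j ≠ 0) :
    ∃ s : ℝ,
      A.charpoly.IsRoot s
      ∧ A.charpoly.rootMultiplicity s = 1
      ∧ (∃ w : Fin n → ℝ, (∀ i, 0 < w i) ∧ A.mulVec w = s • w)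
      ∧ (∀ lam : ℂ, (A.map (Complex.ofReal)).charpoly.IsRoot lam →
          lam ≠ (s : ℂ) → lam.re < s) := by
  have hNE : Nonempty (Fin n) := ⟨⟨0, by omega⟩⟩
  set c : ℝ := 1 + ∑ i, |A i i| with hc
  set B : Matrix (Fin n) (Fin n) ℝ := A + c • 1 with hBdef
  have hBoff : ∀ i j, i ≠ j → B i j = A i j := by
    intro i j h
    simp [hBdef, Matrix.one_apply_ne h]
  have hBdiag : ∀ i, B i i = A i i + c := by
    intro i
    simp [hBdef, Matrix.one_apply]
  have habs : ∀ i : Fin n, |A i i| ≤ ∑ k, |A k k| := fun i =>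
    Finset.single_le_sum (f := fun k => |A k k|) (fun k _ => abs_nonneg _) (Finset.mem_univ i)
  have hBd : ∀ i, 0 < B i i := by
    intro i
    rw [hBdiag, hc]
    have h1 := habs i
    have h2 := neg_abs_le (A i i)
    linarith
  have hB : ∀ i j, 0 ≤ B i j := by
    intro i j
    by_cases h : i = j
    · subst h; exact (hBd i).le
    · rw [hBoff i j h]; exact hquasi i j h
  have hirrB : ∀ I : Set (Fin n), I.Nonempty → Iᶜ.Nonempty →
      ∃ i ∈ I, ∃ j ∈ Iᶜ, 0 < B i j := by
    intro I hI hIc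
    obtain ⟨i, hi, j, hj, hne0⟩ := hirr I hI hIc
    have hij : i ≠ j := by rintro rfl; exact hj hi
    refine ⟨i, hi, j, hj, ?_⟩
    rw [hBoff i j hij]
    exact lt_of_le_of_ne (hquasi i j hij) (Ne.symm hne0)
  obtain ⟨tB, w, hwpos, heigB, hCW⟩ := pf_cw hn B hB hBd hirrB
  set s := tB - c with hs
  have hw0 : w ≠ 0 := fun h => absurd (congrFun h ⟨0, by omega⟩) (hwpos _).ne'
  have hmv1 : ∀ (t : ℝ) (x : Fin n → ℝ), (t • (1 : Matrix (Fin n) (Fin n) ℝ)).mulVec x = t • x := by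
    intro t x
    rw [Matrix.smul_mulVec, Matrix.one_mulVec]
  have hABx : ∀ x : Fin n → ℝ, B.mulVec x = A.mulVec x + c • x := by
    intro x
    rw [hBdef, Matrix.add_mulVec, hmv1]
  have heigA : A.mulVec w = s • w := by
    have h1 := hABx w
    rw [heigB] at h1
    rw [hs, sub_smul, eq_sub_iff_add_eq]
    exact h1.symm
  -- s is a root of charpoly
  have hroot : A.charpoly.IsRoot s := by
    have hdet : (s • (1 : Matrix (Fin n) (Fin n) ℝ) - A).det = 0 := by
      rw [← Matrix.exists_mulVec_eq_zero_iff]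
      refine ⟨w, hw0, ?_⟩
      rw [Matrix.sub_mulVec, hmv1, heigA, sub_self]
    rw [Polynomial.IsRoot, pf_eval_charpoly, hdet]
  -- dominance
  have hdom : ∀ lam : ℂ, ((A.map Complex.ofReal).charpoly).IsRoot lam →
      ‖(lam + c)‖ ≤ tB := fun lam h => pf_dom A B c tB hBdef hCW hB lam h
  have hdomlt : ∀ lam : ℂ, (A.map (Complex.ofReal)).charpoly.IsRoot lam →
      lam ≠ (s : ℂ) → lam.re < s := by
    intro lam hlam hne
    have h1 := hdom lam hlam
    have h2 : lam.re + c ≤ ‖(lam + c)‖ := by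
      have := Complex.re_le_norm (lam + c)
      simpa using this
    by_contra hlt
    push_neg at hlt
    have hre : lam.re = s := by
      have : lam.re ≤ s := by
        have : lam.re + c ≤ tB := le_trans h2 h1
        rw [hs]; linarith
      linarith
    -- abs (lam + c) = re (lam + c), so im = 0
    have habs' : ‖(lam + c)‖ = lam.re + c := by
      have : tB = lam.re + c := by rw [hs] at hre; linarith
      linarith [h1, h2]
    have him : lam.im = 0 := by
      have hsq := Complex.sq_norm (lam + c)
      rw [habs'] at hsq
      have h3 : (lam + (c:ℂ)).re = lam.re + c := by simp
      have h4 : (lam + (c:ℂ)).im = lam.im := by simp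
      rw [Complex.normSq_apply, h3, h4] at hsq
      nlinarith
    apply hne
    apply Complex.ext
    · simpa using hre
    · simpa using him
  -- transpose
  have hirrT : ∀ I : Set (Fin n), I.Nonempty → Iᶜ.Nonempty →
      ∃ i ∈ I, ∃ j ∈ Iᶜ, 0 < Bᵀ i j := by
    intro I hI hIc
    obtain ⟨i, hi, j, hj, hne0⟩ := hirr Iᶜ hIc (by rwa [compl_compl])
    have hij : i ≠ j := by rintro rfl; exact hi (by simpa using hj)
    refine ⟨j, (by simpa using hj), i, (by simpa using hi), ?_⟩
    rw [Matrix.transpose_apply, hBoff i j hij]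
    exact lt_of_le_of_ne (hquasi i j hij) (Ne.symm hne0)
  have hBT : ∀ i j, 0 ≤ Bᵀ i j := fun i j => hB j i
  have hBTd : ∀ i, 0 < Bᵀ i i := fun i => hBd i
  obtain ⟨tT, y, hypos, heigT, hCWT⟩ := pf_cw hn Bᵀ hBT hBTd hirrT
  have hBTeq : Bᵀ = Aᵀ + c • 1 := by
    rw [hBdef, Matrix.transpose_add, Matrix.transpose_smul, Matrix.transpose_one]
  have hmapchar : (Aᵀ.map Complex.ofReal).charpoly = (A.map Complex.ofReal).charpoly := by
    rw [show (Aᵀ.map Complex.ofReal) = Aᵀ.map (Complex.ofRealHom : ℝ →+* ℂ) from rfl,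
      show (A.map Complex.ofReal) = A.map (Complex.ofRealHom : ℝ →+* ℂ) from rfl,
      Matrix.charpoly_map, Matrix.charpoly_map, pf_charpoly_transpose]
  have hrootC : ∀ r : ℝ, A.charpoly.IsRoot r →
      ((A.map Complex.ofReal).charpoly).IsRoot ((r : ℝ) : ℂ) := by
    intro r hr
    rw [show (A.map Complex.ofReal) = A.map (Complex.ofRealHom : ℝ →+* ℂ) from rfl,
      Matrix.charpoly_map, Polynomial.IsRoot, Polynomial.eval_map,
      show ((r : ℝ) : ℂ) = Complex.ofRealHom r from rfl, Polynomial.eval₂_at_apply]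
    rw [Polynomial.IsRoot] at hr
    rw [hr, map_zero]
  -- tT = tB
  have hsT : Aᵀ.mulVec y = (tT - c) • y := by
    have h1 : Bᵀ.mulVec y = Aᵀ.mulVec y + c • y := by
      rw [hBTeq, Matrix.add_mulVec, hmv1]
    rw [heigT] at h1
    rw [sub_smul, eq_sub_iff_add_eq]
    exact h1.symm
  have hy0 : y ≠ 0 := fun h => absurd (congrFun h ⟨0, by omega⟩) (hypos _).ne'
  have hrootT : Aᵀ.charpoly.IsRoot (tT - c) := by
    have hdet : ((tT - c) • (1 : Matrix (Fin n) (Fin n) ℝ) - Aᵀ).det = 0 := by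
      rw [← Matrix.exists_mulVec_eq_zero_iff]
      refine ⟨y, hy0, ?_⟩
      rw [Matrix.sub_mulVec, hmv1, hsT, sub_self]
    rw [Polynomial.IsRoot, pf_eval_charpoly, hdet]
  have htT : tT = tB := by
    have hdomT : ∀ lam : ℂ, ((Aᵀ.map Complex.ofReal).charpoly).IsRoot lam →
        ‖(lam + c)‖ ≤ tT := fun lam h => pf_dom Aᵀ Bᵀ c tT hBTeq hCWT hBT lam h
    -- tT - c ≤ s
    have h1 : tT - c ≤ s := by
      have hrootT' : A.charpoly.IsRoot (tT - c) := by
        rw [← pf_charpoly_transpose A]; exact hrootT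
      have hr : ((A.map Complex.ofReal).charpoly).IsRoot ((tT - c : ℝ) : ℂ) :=
        hrootC _ hrootT'
      have := hdom _ hr
      have h2 : ((tT - c : ℝ) : ℂ) + (c : ℂ) = ((tT : ℝ) : ℂ) := by push_cast; ring
      rw [h2, Complex.norm_real, Real.norm_eq_abs] at this
      have := le_trans (le_abs_self tT) this
      rw [hs]; linarith
    have h2 : s ≤ tT - c := by
      have hr : ((Aᵀ.map Complex.ofReal).charpoly).IsRoot ((s : ℝ) : ℂ) := by
        rw [hmapchar]
        exact hrootC _ hroot
      have := hdomT _ hr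
      have h3 : ((s : ℝ) : ℂ) + (c : ℂ) = ((s + c : ℝ) : ℂ) := by push_cast; ring
      rw [h3, Complex.norm_real, Real.norm_eq_abs] at this
      have := le_trans (le_abs_self (s + c)) this
      linarith
    have : tT - c = s := le_antisymm h1 h2
    rw [hs] at this; linarith
  have heigTy : Aᵀ.mulVec y = s • y := by rw [hsT, htT, hs]
  -- geometric simplicity
  set P := B ^ (n - 1) with hPdef
  have hP : ∀ i j, 0 < P i j := pf_pow_pos B hB hBd hirrB
  have hgeo : ∀ x : Fin n → ℝ, A.mulVec x = s • x → ∃ r : ℝ, x = r • w := by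
    intro x hx
    have hBx : B.mulVec x = tB • x := by
      rw [hABx, hx, hs, sub_smul]
      abel
    obtain ⟨i0, _, hi0⟩ := Finset.exists_mem_eq_inf' (Finset.univ_nonempty) (fun i => x i / w i)
    set r := Finset.univ.inf' (Finset.univ_nonempty) (fun i => x i / w i) with hr
    set z := x - r • w with hz
    have hznn : ∀ i, 0 ≤ z i := by
      intro i
      have h1 : r ≤ x i / w i := Finset.inf'_le _ (Finset.mem_univ i)
      have h2 : r * w i ≤ x i := by
        rw [← le_div_iff₀ (hwpos i)]; exact h1
      simp only [hz, Pi.sub_apply, Pi.smul_apply, smul_eq_mul]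
      linarith
    have hzi0 : z i0 = 0 := by
      simp only [hz, Pi.sub_apply, Pi.smul_apply, smul_eq_mul]
      rw [hi0, div_mul_cancel₀ _ (hwpos i0).ne']
      ring
    have hBz : B.mulVec z = tB • z := by
      rw [hz, Matrix.mulVec_sub, hBx, Matrix.mulVec_smul, heigB, smul_comm, ← smul_sub]
    by_cases hz0 : z = 0
    · refine ⟨r, ?_⟩
      have h0 : x - r • w = 0 := hz ▸ hz0
      have := sub_eq_zero.mp h0
      exact this
    · exfalso
      obtain ⟨j1, hj1⟩ : ∃ j, 0 < z j := by
        obtain ⟨j, hj⟩ := Function.ne_iff.mp hz0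
        exact ⟨j, lt_of_le_of_ne (hznn j) (Ne.symm hj)⟩
      have hPz : P.mulVec z = tB ^ (n-1) • z := pf_pow_eig B z tB hBz (n-1)
      have hpos : 0 < P.mulVec z i0 :=
        Finset.sum_pos' (fun j _ => mul_nonneg (hP i0 j).le (hznn j))
          ⟨j1, Finset.mem_univ j1, mul_pos (hP i0 j1) hj1⟩
      rw [hPz] at hpos
      simp only [Pi.smul_apply, smul_eq_mul, hzi0, mul_zero] at hpos
      exact lt_irrefl 0 hpos
  -- kernel of powers
  have hyw : 0 < y ⬝ᵥ w :=
    Finset.sum_pos (fun i _ => mul_pos (hypos i) (hwpos i)) Finset.univ_nonempty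
  set N := A - s • (1 : Matrix (Fin n) (Fin n) ℝ) with hN
  have hNmv : ∀ x : Fin n → ℝ, N.mulVec x = A.mulVec x - s • x := by
    intro x; rw [hN, Matrix.sub_mulVec, hmv1]
  have hNT : Nᵀ.mulVec y = 0 := by
    have : Nᵀ = Aᵀ - s • 1 := by
      rw [hN, Matrix.transpose_sub, Matrix.transpose_smul, Matrix.transpose_one]
    rw [this, Matrix.sub_mulVec, hmv1, heigTy, sub_self]
  have hker : ∀ x : Fin n → ℝ, ∀ k : ℕ, 1 ≤ k → (N ^ k).mulVec x = 0 → ∃ r : ℝ, x = r • w := by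
    intro x k
    induction k generalizing x with
    | zero => omega
    | succ k ih =>
      intro _ hk
      rcases Nat.eq_zero_or_pos k with h | h
      · subst h
        rw [pow_one] at hk
        rw [hNmv, sub_eq_zero] at hk
        exact hgeo x hk
      · rw [pow_succ, ← Matrix.mulVec_mulVec] at hk
        obtain ⟨r, hr⟩ := ih (N.mulVec x) h hk
        have hr0 : r = 0 := by
          have h1 : y ⬝ᵥ N.mulVec x = r * (y ⬝ᵥ w) := by
            rw [hr, dotProduct_smul, smul_eq_mul]
          have h2 : y ⬝ᵥ N.mulVec x = 0 := by
            rw [Matrix.dotProduct_mulVec]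
            have : Matrix.vecMul y N = Nᵀ.mulVec y := by
              rw [← Matrix.vecMul_transpose, Matrix.transpose_transpose]
            rw [this, hNT, zero_dotProduct]
          rw [h1] at h2
          exact (mul_eq_zero.mp h2).resolve_right hyw.ne'
        rw [hr0, zero_smul] at hr
        rw [hNmv, sub_eq_zero] at hr
        exact hgeo x hr
  have hmult : A.charpoly.rootMultiplicity s = 1 := by
    refine pf_rootMultiplicity A s w hw0 ?_ hker
    rw [← hN]
    rw [hNmv, heigA, sub_self]
  exact ⟨s, hroot, hmult, ⟨w, hwpos, heigA⟩, hdomlt⟩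
end

section
/- Let A be the Maxwell-Stefan matrix for x ≫ 0 with ∑ x_i = 1, and E = {u ∈ ℝⁿ : ∑ u_i = 0}. Then for every d ∈ E the equation A J = d has a unique solution J ∈ E; moreover, for sufficiently small μ > 0 the matrix A_μ := A − μ (x ⊗ e) is invertible on ℝⁿ and J = A_μ^{−1} d. -/
theorem MS_inversion
    (n : ℕ) (hn : 2 ≤ n)
    (D : Fin n → Fin n → ℝ)
    (hDpos : ∀ i j, i ≠ j → 0 < D i j)
    (hDsymm : ∀ i j, D i j = D j i)
    (x : Fin n → ℝ) (hx : ∀ i, 0 < x i) (hxsum : ∑ i, x i = 1)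
    (A : Matrix (Fin n) (Fin n) ℝ)
    (hA : ∀ i j, A i j =
      if i = j then -(∑ k ∈ Finset.univ.erase i, x k / D i k) else x i / D i j) :
    (∀ d : Fin n → ℝ, ∑ i, d i = 0 →
      ∃! J : Fin n → ℝ, (∑ i, J i = 0) ∧ A.mulVec J = d)
    ∧ ∃ μ₀ : ℝ, 0 < μ₀ ∧ ∀ μ : ℝ, 0 < μ → μ < μ₀ →
        IsUnit (A - μ • Matrix.vecMulVec x (fun _ => (1 : ℝ)))
        ∧ ∀ d J : Fin n → ℝ, ∑ i, d i = 0 → ∑ i, J i = 0 → A.mulVec J = d →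
            (A - μ • Matrix.vecMulVec x (fun _ => (1 : ℝ))).mulVec J = d := by
  have hnem : Nonempty (Fin n) := ⟨⟨0, by omega⟩⟩
  -- column sums of A vanish
  have hcol : ∀ j, ∑ i, A i j = 0 := by
    intro j
    rw [← Finset.add_sum_erase Finset.univ (fun i => A i j) (Finset.mem_univ j)]
    rw [hA j j, if_pos rfl]
    have h1 : ∑ i ∈ Finset.univ.erase j, A i j
        = ∑ k ∈ Finset.univ.erase j, x k / D j k := by
      refine Finset.sum_congr rfl (fun i hi => ?_)
      rw [hA i j, if_neg (Finset.ne_of_mem_erase hi), hDsymm i j]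
    rw [h1]; ring
  -- consequently the coordinates of A.mulVec v always sum to zero
  have hsumA : ∀ v : Fin n → ℝ, ∑ i, (A.mulVec v) i = 0 := by
    intro v
    simp only [Matrix.mulVec, dotProduct]
    rw [Finset.sum_comm]
    have : ∀ j : Fin n, ∑ i, A i j * v j = 0 := by
      intro j; rw [← Finset.sum_mul, hcol j, zero_mul]
    exact Finset.sum_eq_zero (fun j _ => this j)
  -- kernel of A intersected with the zero-sum hyperplane is trivial
  have hker : ∀ u : Fin n → ℝ, A.mulVec u = 0 → ∑ i, u i = 0 → u = 0 := by
    intro u hAu hsu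
    obtain ⟨i₀, -, hmax⟩ :=
      Finset.exists_max_image Finset.univ (fun i => u i / x i) Finset.univ_nonempty
    set c := u i₀ / x i₀ with hc
    have hub : ∀ j, u j ≤ c * x j := by
      intro j
      have h1 := hmax j (Finset.mem_univ j)
      have h2 := (div_le_div_iff₀ (hx j) (hx i₀)).mp h1
      have hxi := (hx i₀)
      rw [hc]
      rw [div_mul_eq_mul_div, le_div_iff₀ hxi]
      linarith
    have hui₀ : u i₀ = c * x i₀ := by
      rw [hc, div_mul_cancel₀ (u i₀) (hx i₀).ne']
    have h0 : (A.mulVec u) i₀ = 0 := by rw [hAu]; rfl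
    have hexp : (A.mulVec u) i₀
        = ∑ j ∈ Finset.univ.erase i₀, (x i₀ * u j - x j * u i₀) / D i₀ j := by
      simp only [Matrix.mulVec, dotProduct]
      rw [← Finset.sum_erase_add Finset.univ (fun j => A i₀ j * u j) (Finset.mem_univ i₀)]
      rw [hA i₀ i₀, if_pos rfl, neg_mul, Finset.sum_mul]
      rw [Finset.sum_congr rfl (fun j hj => by
        rw [hA i₀ j, if_neg (Ne.symm (Finset.ne_of_mem_erase hj))])]
      rw [← sub_eq_add_neg, ← Finset.sum_sub_distrib]
      refine Finset.sum_congr rfl (fun j hj => ?_)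
      have hD : D i₀ j ≠ 0 := (hDpos i₀ j (Ne.symm (Finset.ne_of_mem_erase hj))).ne'
      field_simp
    have hnonpos : ∀ j ∈ Finset.univ.erase i₀,
        (x i₀ * u j - x j * u i₀) / D i₀ j ≤ 0 := by
      intro j hj
      have hD := hDpos i₀ j (Ne.symm (Finset.ne_of_mem_erase hj))
      have h1 : x i₀ * u j ≤ x i₀ * (c * x j) :=
        mul_le_mul_of_nonneg_left (hub j) (hx i₀).le
      have hnum : x i₀ * u j - x j * u i₀ ≤ 0 := by
        rw [hui₀]; nlinarith
      exact div_nonpos_of_nonpos_of_nonneg hnum hD.le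
    have hzero : ∀ j ∈ Finset.univ.erase i₀,
        (x i₀ * u j - x j * u i₀) / D i₀ j = 0 := by
      have hs : ∑ j ∈ Finset.univ.erase i₀,
          (x i₀ * u j - x j * u i₀) / D i₀ j = 0 := by rw [← hexp, h0]
      exact fun j hj => (Finset.sum_eq_zero_iff_of_nonpos hnonpos).mp hs j hj
    have hall : ∀ j, u j = c * x j := by
      intro j
      by_cases hji : j = i₀
      · rw [hji]; exact hui₀
      · have hj : j ∈ Finset.univ.erase i₀ := Finset.mem_erase.mpr ⟨hji, Finset.mem_univ j⟩
        have hD := hDpos i₀ j (Ne.symm hji)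
        have h1 := hzero j hj
        rw [div_eq_zero_iff] at h1
        rcases h1 with h1 | h1
        · have heq : x i₀ * u j = x j * u i₀ := by linarith
          rw [hui₀] at heq
          have h2 : x i₀ * u j = x i₀ * (c * x j) := by rw [heq]; ring
          exact mul_left_cancel₀ (hx i₀).ne' h2
        · exact absurd h1 hD.ne'
    have hceq : c = 0 := by
      have : ∑ i, u i = c * ∑ i, x i := by
        rw [Finset.mul_sum]
        exact Finset.sum_congr rfl (fun j _ => hall j)
      rw [hxsum, mul_one] at this
      linarith [this, hsu]
    funext j
    rw [hall j, hceq, zero_mul]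
    rfl
  -- mulVec of the rank-one perturbation
  have hxe : ∀ (μ : ℝ) (v : Fin n → ℝ) (i : Fin n),
      ((A - μ • Matrix.vecMulVec x (fun _ => (1 : ℝ))).mulVec v) i
        = (A.mulVec v) i - μ * x i * ∑ j, v j := by
    intro μ v i
    simp only [Matrix.mulVec, dotProduct, Matrix.sub_apply, Matrix.smul_apply,
      Matrix.vecMulVec_apply, smul_eq_mul, mul_one, sub_mul]
    rw [Finset.sum_sub_distrib, ← Finset.mul_sum, mul_assoc]
  -- kernel of the perturbed matrix is trivial for μ ≠ 0
  have hkerμ : ∀ μ : ℝ, μ ≠ 0 → ∀ u : Fin n → ℝ,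
      (A - μ • Matrix.vecMulVec x (fun _ => (1 : ℝ))).mulVec u = 0 → u = 0 := by
    intro μ hμ u hu
    have hsum0 : ∑ i, u i = 0 := by
      have h1 : ∑ i, ((A - μ • Matrix.vecMulVec x (fun _ => (1 : ℝ))).mulVec u) i = 0 := by
        rw [hu]; simp
      have h2 : ∑ i, ((A.mulVec u) i - μ * x i * ∑ j, u j) = 0 := by
        rw [← h1]
        exact Finset.sum_congr rfl (fun i _ => (hxe μ u i).symm)
      rw [Finset.sum_sub_distrib, hsumA u, zero_sub, neg_eq_zero] at h2
      have h3 : ∑ i, μ * x i * ∑ j, u j = μ * (∑ j, u j) * ∑ i, x i := by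
        rw [show μ * (∑ j, u j) * ∑ i, x i = ∑ i, (μ * ∑ j, u j) * x i from Finset.mul_sum ..]
        exact Finset.sum_congr rfl (fun i _ => by ring)
      rw [h3, hxsum, mul_one] at h2
      exact (mul_eq_zero.mp h2).resolve_left hμ
    have hAu : A.mulVec u = 0 := by
      funext i
      have := congrFun hu i
      rw [hxe μ u i, hsum0] at this
      simpa using this
    exact hker u hAu hsum0
  -- invertibility of the perturbed matrix for μ ≠ 0
  have hunit : ∀ μ : ℝ, μ ≠ 0 →
      IsUnit (A - μ • Matrix.vecMulVec x (fun _ => (1 : ℝ))) := by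
    intro μ hμ
    set M := A - μ • Matrix.vecMulVec x (fun _ => (1 : ℝ)) with hM
    have hdet : M.det ≠ 0 := by
      intro hd
      obtain ⟨v, hv, hv0⟩ := (Matrix.exists_mulVec_eq_zero_iff).mpr hd
      exact hv (hkerμ μ hμ v hv0)
    exact (Matrix.isUnit_iff_isUnit_det M).mpr (isUnit_iff_ne_zero.mpr hdet)
  constructor
  · -- existence and uniqueness of J
    intro d hd
    -- use the invertible matrix with μ = 1
    set M := A - (1 : ℝ) • Matrix.vecMulVec x (fun _ => (1 : ℝ)) with hM
    have hMunit : IsUnit M := hunit 1 one_ne_zero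
    obtain ⟨J, hJ⟩ : ∃ J, M.mulVec J = d := by
      refine ⟨M⁻¹.mulVec d, ?_⟩
      rw [Matrix.mulVec_mulVec,
        Matrix.mul_nonsing_inv M ((Matrix.isUnit_iff_isUnit_det M).mp hMunit),
        Matrix.one_mulVec]
    have hJsum : ∑ i, J i = 0 := by
      have h1 : ∑ i, (M.mulVec J) i = 0 := by rw [hJ]; exact hd
      have h2 : ∑ i, ((A.mulVec J) i - 1 * x i * ∑ j, J j) = 0 := by
        rw [← h1]
        exact Finset.sum_congr rfl (fun i _ => (hxe 1 J i).symm)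
      rw [Finset.sum_sub_distrib, hsumA J, zero_sub, neg_eq_zero] at h2
      have h3 : ∑ i, 1 * x i * ∑ j, J j = (∑ j, J j) * ∑ i, x i := by
        rw [show (∑ j, J j) * ∑ i, x i = ∑ i, (∑ j, J j) * x i from Finset.mul_sum ..]
        exact Finset.sum_congr rfl (fun i _ => by ring)
      rw [h3, hxsum, mul_one] at h2
      exact h2
    have hAJ : A.mulVec J = d := by
      funext i
      have := congrFun hJ i
      rw [hxe 1 J i, hJsum] at this
      simpa using this
    refine ⟨J, ⟨hJsum, hAJ⟩, ?_⟩
    rintro J' ⟨hJ'sum, hAJ'⟩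
    have hdiff : A.mulVec (J' - J) = 0 := by
      rw [Matrix.mulVec_sub, hAJ', hAJ, sub_self]
    have hdsum : ∑ i, (J' - J) i = 0 := by
      simp only [Pi.sub_apply]
      rw [Finset.sum_sub_distrib, hJ'sum, hJsum, sub_self]
    have := hker (J' - J) hdiff hdsum
    funext i
    have h := congrFun this i
    simp only [Pi.sub_apply, Pi.zero_apply, sub_eq_zero] at h
    exact h
  · refine ⟨1, one_pos, fun μ hμ0 _ => ⟨hunit μ hμ0.ne', ?_⟩⟩
    intro d J _ hJsum hAJ
    funext i
    rw [hxe μ J i, hJsum, hAJ]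
    ring
end

section
/- Let A_S be the symmetrized Maxwell-Stefan matrix, X = diag(x), G'' a symmetric positive definite n×n matrix, and D := X^{1/2} (A_{S|Ê})^{−1} X^{1/2} G'' restricted to E = {u : ∑ u_i = 0}, with Ê = {√x}^⊥. Then every eigenvalue λ of D on E with eigenvector v ∈ E, v ≠ 0, satisfies λ > 0 and λ is real. (Proof idea: test the eigenvalue equation with G'' v and use negative definiteness of A_S on Ê and positive definiteness of G''.) -/
theorem MS_diffusion_matrix_positive_real_spectrum
    (n : ℕ) (hn : 2 ≤ n)
    (D : Fin n → Fin n → ℝ)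
    (hDpos : ∀ i j, i ≠ j → 0 < D i j)
    (hDsymm : ∀ i j, D i j = D j i)
    (x : Fin n → ℝ) (hx : ∀ i, 0 < x i) (hxsum : ∑ i, x i = 1)
    (AS : Matrix (Fin n) (Fin n) ℝ)
    (hAS : ∀ i j, AS i j =
      if i = j then -(∑ k ∈ Finset.univ.erase i, x k / D i k)
      else Real.sqrt (x i * x j) / D i j)
    (X12 : Matrix (Fin n) (Fin n) ℝ)
    (hX12 : X12 = Matrix.diagonal fun i => Real.sqrt (x i))
    (G : Matrix (Fin n) (Fin n) ℝ) (hG : G.PosDef) :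
    -- eigenvalue equation for D(u) = X^{1/2} (-A_S|Ê)^{-1} X^{1/2} G'' on E
    -- (the diffusion matrix of the Maxwell-Stefan system), phrased via:
    -- (-A_S) w = X^{1/2} G'' v with w ∈ Ê and X^{1/2} w = λ v
    ∀ (lam : ℂ) (v w : Fin n → ℂ),
      (∑ i, v i = 0) → v ≠ 0 →
      (∑ i, (Real.sqrt (x i) : ℂ) * w i = 0) →
      ((-AS).map Complex.ofReal).mulVec w
        = (X12.map Complex.ofReal).mulVec ((G.map Complex.ofReal).mulVec v) →
      (X12.map Complex.ofReal).mulVec w = lam • v →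
      lam.im = 0 ∧ 0 < lam.re := by
  intro lam v w hvsum hvne hw hEq hEig
  classical
  set B : Matrix (Fin n) (Fin n) ℝ := -AS with hBdef
  have hB : ∀ i j, B i j = if i = j then (∑ k ∈ Finset.univ.erase i, x k / D i k)
      else -(Real.sqrt (x i * x j) / D i j) := by
    intro i j
    rw [hBdef]
    simp only [Matrix.neg_apply, hAS i j]
    split <;> simp
  have hBsymm : ∀ i j, B i j = B j i := by
    intro i j
    rcases eq_or_ne i j with rfl | hij
    · rfl
    · rw [hB i j, hB j i, if_neg hij, if_neg hij.symm, mul_comm (x i), hDsymm]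
  -- swap lemma for double sums over off-diagonal pairs
  have hsw : ∀ f : Fin n → Fin n → ℝ,
      ∑ i, ∑ j ∈ Finset.univ.erase i, f i j
        = ∑ i, ∑ j ∈ Finset.univ.erase i, f j i := by
    intro f
    simp_rw [← Finset.filter_ne' Finset.univ, Finset.sum_filter]
    rw [Finset.sum_comm]
    refine Finset.sum_congr rfl fun i _ => Finset.sum_congr rfl fun j _ => ?_
    simp [ne_comm]
  -- quadratic form identity
  have hQform : ∀ u : Fin n → ℝ,
      2 * (∑ i, ∑ j, B i j * (u i * u j))
        = ∑ i, ∑ j ∈ Finset.univ.erase i,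
            (Real.sqrt (x j) * u i - Real.sqrt (x i) * u j)^2 / D i j := by
    intro u
    have hL : ∀ i, ∑ j, B i j * (u i * u j)
        = ∑ j ∈ Finset.univ.erase i,
            (x j * (u i * u i) / D i j
              - Real.sqrt (x i) * Real.sqrt (x j) * (u i * u j) / D i j) := by
      intro i
      rw [← Finset.add_sum_erase _ _ (Finset.mem_univ i), hB i i, if_pos rfl,
        Finset.sum_mul]
      rw [← Finset.sum_add_distrib]
      refine Finset.sum_congr rfl fun j hj => ?_
      have hji : j ≠ i := Finset.ne_of_mem_erase hj
      rw [hB i j, if_neg (fun h => hji h.symm), Real.sqrt_mul (hx i).le]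
      ring
    have hA1 : ∑ i, ∑ j ∈ Finset.univ.erase i, x i * (u j * u j) / D i j
        = ∑ i, ∑ j ∈ Finset.univ.erase i, x j * (u i * u i) / D i j := by
      rw [hsw fun i j => x i * (u j * u j) / D i j]
      refine Finset.sum_congr rfl fun i _ => Finset.sum_congr rfl fun j _ => ?_
      rw [hDsymm]
    have hnum : ∀ i j : Fin n, (Real.sqrt (x j) * u i - Real.sqrt (x i) * u j)^2
        = x j * (u i * u i) + x i * (u j * u j)
          - 2 * (Real.sqrt (x i) * Real.sqrt (x j) * (u i * u j)) := by
      intro i j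
      have h1 : Real.sqrt (x j) * Real.sqrt (x j) = x j := Real.mul_self_sqrt (hx j).le
      have h2 : Real.sqrt (x i) * Real.sqrt (x i) = x i := Real.mul_self_sqrt (hx i).le
      linear_combination (u i)^2 * h1 + (u j)^2 * h2
    have hstepA : 2 * (∑ i, ∑ j, B i j * (u i * u j))
        = 2 * (∑ i, ∑ j ∈ Finset.univ.erase i, x j * (u i * u i) / D i j)
          - 2 * ∑ i, ∑ j ∈ Finset.univ.erase i,
              Real.sqrt (x i) * Real.sqrt (x j) * (u i * u j) / D i j := by
      simp_rw [hL, Finset.sum_sub_distrib]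
      ring
    have hstepB : ∑ i, ∑ j ∈ Finset.univ.erase i,
          (Real.sqrt (x j) * u i - Real.sqrt (x i) * u j)^2 / D i j
        = (∑ i, ∑ j ∈ Finset.univ.erase i, x j * (u i * u i) / D i j)
          + (∑ i, ∑ j ∈ Finset.univ.erase i, x i * (u j * u j) / D i j)
          - 2 * ∑ i, ∑ j ∈ Finset.univ.erase i,
              Real.sqrt (x i) * Real.sqrt (x j) * (u i * u j) / D i j := by
      simp_rw [Finset.mul_sum, ← Finset.sum_add_distrib, ← Finset.sum_sub_distrib]
      refine Finset.sum_congr rfl fun i _ => Finset.sum_congr rfl fun j _ => ?_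
      rw [hnum i j]
      ring
    rw [hstepA, hstepB, hA1]
    ring
  have hQnonneg : ∀ u : Fin n → ℝ, 0 ≤ ∑ i, ∑ j, B i j * (u i * u j) := by
    intro u
    have h2 := hQform u
    have : 0 ≤ ∑ i, ∑ j ∈ Finset.univ.erase i,
        (Real.sqrt (x j) * u i - Real.sqrt (x i) * u j)^2 / D i j := by
      refine Finset.sum_nonneg fun i _ => Finset.sum_nonneg fun j hj => ?_
      exact div_nonneg (sq_nonneg _) (hDpos i j (Finset.ne_of_mem_erase hj).symm).le
    linarith
  have hQpos : ∀ u : Fin n → ℝ, (∑ i, Real.sqrt (x i) * u i = 0) → u ≠ 0 →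
      0 < ∑ i, ∑ j, B i j * (u i * u j) := by
    intro u hucon hune
    rcases lt_or_eq_of_le (hQnonneg u) with h | h
    · exact h
    exfalso
    have hz : ∑ i, ∑ j ∈ Finset.univ.erase i,
        (Real.sqrt (x j) * u i - Real.sqrt (x i) * u j)^2 / D i j = 0 := by
      rw [← hQform u, ← h]; ring
    have hterm : ∀ i j, j ≠ i → Real.sqrt (x j) * u i = Real.sqrt (x i) * u j := by
      intro i j hji
      have h1 := (Finset.sum_eq_zero_iff_of_nonneg (fun i _ =>
        Finset.sum_nonneg fun j hj =>
          div_nonneg (sq_nonneg _) (hDpos i j (Finset.ne_of_mem_erase hj).symm).le)).mp hz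
        i (Finset.mem_univ i)
      have h2 := (Finset.sum_eq_zero_iff_of_nonneg (fun j hj =>
        div_nonneg (sq_nonneg _) (hDpos i j (Finset.ne_of_mem_erase hj).symm).le)).mp h1
        j (Finset.mem_erase.mpr ⟨hji, Finset.mem_univ j⟩)
      have hD0 : D i j ≠ 0 := (hDpos i j hji.symm).ne'
      rw [div_eq_zero_iff] at h2
      rcases h2 with h2 | h2
      · have := pow_eq_zero_iff (n := 2) (by norm_num) |>.mp h2
        linarith [this]
      · exact absurd h2 hD0
    apply hune
    funext i
    have hkey : ∀ j, Real.sqrt (x j) * (Real.sqrt (x j) * u i)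
        = Real.sqrt (x j) * (Real.sqrt (x i) * u j) := by
      intro j
      rcases eq_or_ne j i with rfl | hji
      · rfl
      · rw [hterm i j hji]
    have hcalc : u i = Real.sqrt (x i) * ∑ j, Real.sqrt (x j) * u j := by
      calc u i = u i * ∑ j, x j := by rw [hxsum]; ring
        _ = ∑ j, Real.sqrt (x j) * (Real.sqrt (x j) * u i) := by
            rw [Finset.mul_sum]
            refine Finset.sum_congr rfl fun j _ => ?_
            rw [← mul_assoc, Real.mul_self_sqrt (hx j).le]; ring
        _ = ∑ j, Real.sqrt (x j) * (Real.sqrt (x i) * u j) := by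
            exact Finset.sum_congr rfl fun j _ => hkey j
        _ = Real.sqrt (x i) * ∑ j, Real.sqrt (x j) * u j := by
            rw [Finset.mul_sum]
            exact Finset.sum_congr rfl fun j _ => by ring
    rw [hucon, mul_zero] at hcalc
    simpa using hcalc
  -- sesquilinear form of a real symmetric matrix is real
  have hherm : ∀ (M : Matrix (Fin n) (Fin n) ℝ), (∀ i j, M i j = M j i) →
      ∀ z : Fin n → ℂ,
      ∑ i, ∑ j, (M i j : ℂ) * ((starRingEnd ℂ) (z i) * z j)
        = (((∑ i, ∑ j, M i j * ((z i).re * (z j).re))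
            + ∑ i, ∑ j, M i j * ((z i).im * (z j).im) : ℝ) : ℂ) := by
    intro M hM z
    refine Complex.ext ?_ ?_
    · simp only [Complex.re_sum, Complex.ofReal_re, Complex.mul_re, Complex.mul_im,
        Complex.conj_re, Complex.conj_im, Complex.ofReal_im]
      rw [← Finset.sum_add_distrib]
      refine Finset.sum_congr rfl fun i _ => ?_
      rw [← Finset.sum_add_distrib]
      exact Finset.sum_congr rfl fun j _ => by ring
    · simp only [Complex.im_sum, Complex.ofReal_im, Complex.mul_re, Complex.mul_im,
        Complex.conj_re, Complex.conj_im, Complex.ofReal_re]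
      have hsplit : ∀ i j, M i j * ((z i).re * (z j).im + -(z i).im * (z j).re)
          + 0 * ((z i).re * (z j).re - -(z i).im * (z j).im)
          = M i j * ((z i).re * (z j).im) - M i j * ((z i).im * (z j).re) := by
        intro i j; ring
      simp_rw [hsplit, Finset.sum_sub_distrib]
      have : ∑ i, ∑ j, M i j * ((z i).im * (z j).re)
          = ∑ i, ∑ j, M i j * ((z i).re * (z j).im) := by
        rw [Finset.sum_comm]
        refine Finset.sum_congr rfl fun i _ => Finset.sum_congr rfl fun j _ => ?_
        rw [hM j i]; ring
      rw [this, sub_self]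
  -- unfolding mulVec with the diagonal matrix
  have hX12C : ∀ (z : Fin n → ℂ) i,
      (X12.map Complex.ofReal).mulVec z i = (Real.sqrt (x i) : ℂ) * z i := by
    intro z i
    simp [hX12, Matrix.mulVec, dotProduct, Matrix.map_apply, Matrix.diagonal,
      apply_ite Complex.ofReal, ite_mul]
  have hBC : ∀ (z : Fin n → ℂ) i,
      ((-AS).map Complex.ofReal).mulVec z i = ∑ j, (B i j : ℂ) * z j := by
    intro z i
    simp [Matrix.mulVec, dotProduct, Matrix.map_apply, hBdef]
  -- real parts / symmetry of G
  have hGsymm : ∀ i j, G i j = G j i := fun i j => (Matrix.IsHermitian.apply hG.1 i j).symm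
  have hGquadpos : ∀ u : Fin n → ℝ, u ≠ 0 → 0 < ∑ i, ∑ j, G i j * (u i * u j) := by
    intro u hu
    have := hG.dotProduct_mulVec_pos hu
    simpa [dotProduct, Matrix.mulVec, Finset.mul_sum, mul_comm, mul_assoc,
      mul_left_comm] using this
  have hGquadnonneg : ∀ u : Fin n → ℝ, 0 ≤ ∑ i, ∑ j, G i j * (u i * u j) := by
    intro u
    rcases eq_or_ne u 0 with rfl | hu
    · simp
    · exact (hGquadpos u hu).le
  -- P := v* G v
  set gvec : Fin n → ℂ := (G.map Complex.ofReal).mulVec v with hgvec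
  have hgv : ∀ i, gvec i = ∑ j, (G i j : ℂ) * v j := by
    intro i
    simp [hgvec, Matrix.mulVec, dotProduct, Matrix.map_apply]
  set P : ℂ := ∑ i, (starRingEnd ℂ) (v i) * gvec i with hPdef
  have hPsum : P = ∑ i, ∑ j, (G i j : ℂ) * ((starRingEnd ℂ) (v i) * v j) := by
    rw [hPdef]
    refine Finset.sum_congr rfl fun i _ => ?_
    rw [hgv i, Finset.mul_sum]
    exact Finset.sum_congr rfl fun j _ => by ring
  set pR : ℝ := (∑ i, ∑ j, G i j * ((v i).re * (v j).re))
      + ∑ i, ∑ j, G i j * ((v i).im * (v j).im) with hpRdef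
  have hPreal : P = (pR : ℂ) := by rw [hPsum, hherm G hGsymm v]
  have hpRpos : 0 < pR := by
    have hvcases : (fun i => (v i).re) ≠ 0 ∨ (fun i => (v i).im) ≠ 0 := by
      by_contra hcon
      push_neg at hcon
      apply hvne
      funext i
      have h1 := congrFun hcon.1 i
      have h2 := congrFun hcon.2 i
      simp only [Pi.zero_apply] at h1 h2
      exact Complex.ext h1 h2
    rcases hvcases with h | h
    · have := hGquadpos _ h
      have h2 := hGquadnonneg (fun i => (v i).im)
      rw [hpRdef]
      linarith
    · have := hGquadpos _ h
      have h2 := hGquadnonneg (fun i => (v i).re)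
      rw [hpRdef]
      linarith
  -- T := w* B w and the eigen-equation chain
  set T : ℂ := ∑ i, (starRingEnd ℂ) (w i) * (((-AS).map Complex.ofReal).mulVec w i)
    with hTdef
  have hTsum : T = ∑ i, ∑ j, (B i j : ℂ) * ((starRingEnd ℂ) (w i) * w j) := by
    rw [hTdef]
    refine Finset.sum_congr rfl fun i _ => ?_
    rw [hBC w i, Finset.mul_sum]
    exact Finset.sum_congr rfl fun j _ => by ring
  set tR : ℝ := (∑ i, ∑ j, B i j * ((w i).re * (w j).re))
      + ∑ i, ∑ j, B i j * ((w i).im * (w j).im) with htRdef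
  have hTreal : T = (tR : ℂ) := by rw [hTsum, hherm B hBsymm w]
  have hTP : T = (starRingEnd ℂ) lam * P := by
    rw [hTdef]
    calc ∑ i, (starRingEnd ℂ) (w i) * (((-AS).map Complex.ofReal).mulVec w i)
        = ∑ i, (starRingEnd ℂ) (w i)
            * ((X12.map Complex.ofReal).mulVec gvec i) := by rw [hEq]
      _ = ∑ i, (starRingEnd ℂ) ((X12.map Complex.ofReal).mulVec w i) * gvec i := by
          refine Finset.sum_congr rfl fun i _ => ?_
          rw [hX12C gvec i, hX12C w i, map_mul, Complex.conj_ofReal]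
          ring
      _ = ∑ i, (starRingEnd ℂ) (lam * v i) * gvec i := by
          refine Finset.sum_congr rfl fun i _ => ?_
          rw [congrFun hEig i]
          simp
      _ = (starRingEnd ℂ) lam * P := by
          rw [hPdef, Finset.mul_sum]
          refine Finset.sum_congr rfl fun i _ => ?_
          rw [map_mul]; ring
  -- rule out w = 0
  have hwne : w ≠ 0 := by
    intro hw0
    rw [hw0] at hEq
    have hgz : ∀ i, gvec i = 0 := by
      intro i
      have := congrFun hEq.symm i
      rw [Matrix.mulVec_zero, hX12C gvec i] at this
      simp only [Pi.zero_apply] at this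
      rcases mul_eq_zero.mp this with h | h
      · exfalso
        have : Real.sqrt (x i) ≠ 0 := (Real.sqrt_pos.mpr (hx i)).ne'
        exact this (by exact_mod_cast h)
      · exact h
    have : P = 0 := by
      rw [hPdef]
      refine Finset.sum_eq_zero fun i _ => ?_
      rw [hgz i, mul_zero]
    rw [hPreal] at this
    have : pR = 0 := by exact_mod_cast this
    linarith
  -- constraints on re and im parts of w
  have hwa : ∑ i, Real.sqrt (x i) * (w i).re = 0 := by
    have := congrArg Complex.re hw
    simpa [Complex.re_sum, Complex.mul_re] using this
  have hwb : ∑ i, Real.sqrt (x i) * (w i).im = 0 := by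
    have := congrArg Complex.im hw
    simpa [Complex.im_sum, Complex.mul_im] using this
  have htRpos : 0 < tR := by
    have hwcases : (fun i => (w i).re) ≠ 0 ∨ (fun i => (w i).im) ≠ 0 := by
      by_contra hcon
      push_neg at hcon
      apply hwne
      funext i
      have h1 := congrFun hcon.1 i
      have h2 := congrFun hcon.2 i
      simp only [Pi.zero_apply] at h1 h2
      exact Complex.ext h1 h2
    rcases hwcases with h | h
    · have := hQpos _ hwa h
      have h2 := hQnonneg (fun i => (w i).im)
      rw [htRdef]
      linarith
    · have := hQpos _ hwb h
      have h2 := hQnonneg (fun i => (w i).re)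
      rw [htRdef]
      linarith
  -- conclude
  have hfin : (tR : ℂ) = (starRingEnd ℂ) lam * (pR : ℂ) := by
    rw [← hPreal, ← hTreal, hTP]
  have him : lam.im = 0 := by
    have := congrArg Complex.im hfin
    simp only [Complex.ofReal_im, Complex.mul_im, Complex.conj_re, Complex.conj_im,
      Complex.ofReal_re] at this
    have h2 : -lam.im * pR = 0 := by linarith
    rcases mul_eq_zero.mp h2 with h | h
    · linarith
    · linarith
  have hre : tR = lam.re * pR := by
    have := congrArg Complex.re hfin
    simp only [Complex.ofReal_re, Complex.mul_re, Complex.conj_re, Complex.conj_im,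
      Complex.ofReal_im] at this
    rw [him] at this
    linarith
  refine ⟨him, ?_⟩
  by_contra hcon
  push_neg at hcon
  nlinarith
end

section
/- The Maxwell-Stefan fluxes satisfy the entropy inequality: with J = (1/(RT)) X^{1/2} (A_{S|Ê})^{−1} X^{1/2} g for g ∈ ℝⁿ (representing the gradients ∇μ_i), one has −⟨J, g⟩ ≥ 0, i.e. ⟨(−A_{S|Ê})^{−1} X^{1/2} g, X^{1/2} g⟩ ≥ 0. -/
open Finset

lemma erase_sum_swap {n : ℕ} (f : Fin n → Fin n → ℝ) :
    ∑ i, ∑ j ∈ Finset.univ.erase i, f i j = ∑ i, ∑ j ∈ Finset.univ.erase i, f j i := by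
  simp_rw [Finset.sum_erase_eq_sub (Finset.mem_univ _), Finset.sum_sub_distrib]
  rw [Finset.sum_comm]

lemma quad_nonpos {n : ℕ} (D : Fin n → Fin n → ℝ)
    (hDpos : ∀ i j, i ≠ j → 0 < D i j)
    (hDsymm : ∀ i j, D i j = D j i)
    (x : Fin n → ℝ) (hx : ∀ i, 0 < x i)
    (AS : Matrix (Fin n) (Fin n) ℝ)
    (hAS : ∀ i j, AS i j =
      if i = j then -(∑ k ∈ Finset.univ.erase i, x k / D i k)
      else Real.sqrt (x i * x j) / D i j)
    (w : Fin n → ℝ) :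
    dotProduct w (AS.mulVec w) ≤ 0 := by
  set a : Fin n → ℝ := fun i => Real.sqrt (x i) with ha
  have hax : ∀ i, x i = a i ^ 2 := fun i => (Real.sq_sqrt (hx i).le).symm
  have hQ : dotProduct w (AS.mulVec w)
      = ∑ i, ∑ j ∈ Finset.univ.erase i,
          (a i * a j * (w i * w j) - a j ^ 2 * w i ^ 2) / D i j := by
    simp only [dotProduct, Matrix.mulVec]
    refine Finset.sum_congr rfl fun i _ => ?_
    rw [← Finset.sum_erase_add _ _ (Finset.mem_univ i)]
    have h1 : ∀ j ∈ Finset.univ.erase i, AS i j * w j = (a i * a j / D i j) * w j := by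
      intro j hj
      have hji : j ≠ i := Finset.ne_of_mem_erase hj
      rw [hAS i j, if_neg (Ne.symm hji), Real.sqrt_mul (hx i).le]
    rw [Finset.sum_congr rfl h1, hAS i i, if_pos rfl, mul_add, Finset.mul_sum, neg_mul,
      mul_neg, Finset.sum_mul, Finset.mul_sum, ← Finset.sum_neg_distrib,
      ← Finset.sum_add_distrib]
    refine Finset.sum_congr rfl fun j hj => ?_
    rw [hax j]
    field_simp
    ring
  set S : ℝ := ∑ i, ∑ j ∈ Finset.univ.erase i, (a j * w i - a i * w j) ^ 2 / D i j with hS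
  have hSnonneg : 0 ≤ S := by
    refine Finset.sum_nonneg fun i _ => Finset.sum_nonneg fun j hj => ?_
    have hji : j ≠ i := Finset.ne_of_mem_erase hj
    exact div_nonneg (sq_nonneg _) (hDpos i j (Ne.symm hji)).le
  have hT : (∑ i, ∑ j ∈ Finset.univ.erase i,
      (a i ^ 2 * w j ^ 2 - a j ^ 2 * w i ^ 2) / D i j) = 0 := by
    have := erase_sum_swap (fun i j => (a i ^ 2 * w j ^ 2 - a j ^ 2 * w i ^ 2) / D i j)
    have heq : ∑ i, ∑ j ∈ Finset.univ.erase i,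
        (a j ^ 2 * w i ^ 2 - a i ^ 2 * w j ^ 2) / D j i
        = -∑ i, ∑ j ∈ Finset.univ.erase i,
        (a i ^ 2 * w j ^ 2 - a j ^ 2 * w i ^ 2) / D i j := by
      rw [← Finset.sum_neg_distrib]
      refine Finset.sum_congr rfl fun i _ => ?_
      rw [← Finset.sum_neg_distrib]
      refine Finset.sum_congr rfl fun j _ => ?_
      rw [hDsymm j i]
      ring
    rw [heq] at this
    linarith
  have hkey : 2 * dotProduct w (AS.mulVec w) + S = 0 := by
    rw [hQ, hS, Finset.mul_sum, ← Finset.sum_add_distrib, ← hT]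
    refine Finset.sum_congr rfl fun i _ => ?_
    rw [Finset.mul_sum, ← Finset.sum_add_distrib]
    refine Finset.sum_congr rfl fun j _ => ?_
    field_simp
    ring
  linarith

theorem MS_entropy_inequality
    (n : ℕ) (hn : 2 ≤ n)
    (R T : ℝ) (hR : 0 < R) (hT : 0 < T)
    (D : Fin n → Fin n → ℝ)
    (hDpos : ∀ i j, i ≠ j → 0 < D i j)
    (hDsymm : ∀ i j, D i j = D j i)
    (x : Fin n → ℝ) (hx : ∀ i, 0 < x i) (hxsum : ∑ i, x i = 1)
    (AS : Matrix (Fin n) (Fin n) ℝ)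
    (hAS : ∀ i j, AS i j =
      if i = j then -(∑ k ∈ Finset.univ.erase i, x k / D i k)
      else Real.sqrt (x i * x j) / D i j)
    (X12 : Matrix (Fin n) (Fin n) ℝ)
    (hX12 : X12 = Matrix.diagonal fun i => Real.sqrt (x i))
    (g : Fin n → ℝ) (hg : ∑ i, x i * g i = 0)  -- X^{1/2} g ∈ Ê
    (w : Fin n → ℝ)
    (hwE : dotProduct w (fun i => Real.sqrt (x i)) = 0)
    (hw : AS.mulVec w = X12.mulVec g)  -- w = (A_S|Ê)^{-1} X^{1/2} g
    (J : Fin n → ℝ)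
    (hJ : J = (R * T)⁻¹ • X12.mulVec w) :
    0 ≤ -(dotProduct J g)
    ∧ 0 ≤ dotProduct (-w) (X12.mulVec g) := by
  have hQ : dotProduct w (AS.mulVec w) ≤ 0 :=
    quad_nonpos D hDpos hDsymm x hx AS hAS w
  have hwXg : dotProduct w (X12.mulVec g) ≤ 0 := by rwa [← hw]
  constructor
  · rw [hJ]
    have hdot : dotProduct (X12.mulVec w) g = dotProduct w (X12.mulVec g) := by
      rw [hX12]
      simp only [dotProduct, Matrix.mulVec_diagonal]
      exact Finset.sum_congr rfl fun i _ => by ring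
    rw [smul_dotProduct, hdot, smul_eq_mul]
    have : (0:ℝ) < (R * T)⁻¹ := by positivity
    nlinarith
  · rw [neg_dotProduct]
    linarith
end
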